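/- arXiv:1206.3183 — 4 statements merged into one kernel-verified Lean document; each statement's English description precedes it below -/
import Mathlib

section
/- The permutation class Av(321, 2143) is the union of the two monotone grid classes with gridding matrices (1 1) (a single row of two increasing cells) and its transpose (a single column of two increasing cells). Equivalently, a permutation σ of length n avoids both 321 and 2143 if and only if either there is a position cut 0 ≤ k ≤ n such that σ is increasing on positions 1,…,k and increasing on positions k+1,…,n, or there is a value cut 0 ≤ m ≤ n such that the positions carrying values ≤ m form an increasing subsequence of σ and the positions carrying values > m form an increasing subsequence of σ. -/
/-- `σ` contains the pattern given by the (distinct) values `p : Fin k → ℕ`. -/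
def Contains {n k : ℕ} (σ : Equiv.Perm (Fin n)) (p : Fin k → ℕ) : Prop :=
  ∃ f : Fin k → Fin n, StrictMono f ∧ ∀ a b : Fin k, σ (f a) < σ (f b) ↔ p a < p b

/-- `σ` avoids the pattern `p`. -/
def Avoids {n k : ℕ} (σ : Equiv.Perm (Fin n)) (p : Fin k → ℕ) : Prop :=
  ¬ Contains σ p

/-- Position `p` lies in the cell in column `i`, row `j` determined by the
column cuts `x` and row cuts `y`. -/
def InCell {n c r : ℕ} (x : Fin (c + 1) → ℕ) (y : Fin (r + 1) → ℕ)
    (σ : Equiv.Perm (Fin n)) (i : Fin c) (j : Fin r) (p : Fin n) : Prop :=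
  x i.castSucc ≤ (p : ℕ) ∧ (p : ℕ) < x i.succ ∧
    y j.castSucc ≤ ((σ p : Fin n) : ℕ) ∧ ((σ p : Fin n) : ℕ) < y j.succ

/-- `σ` lies in the (monotone) grid class of the matrix `M`, indexed by
column (left to right) then row (bottom to top).  Entry `0` means an empty
cell, `1` an increasing cell, `-1` a decreasing cell, and `2` a point cell
(at most one point). -/
def InGrid {n c r : ℕ} (M : Fin c → Fin r → ℤ) (σ : Equiv.Perm (Fin n)) : Prop :=
  ∃ (x : Fin (c + 1) → ℕ) (y : Fin (r + 1) → ℕ),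
    Monotone x ∧ Monotone y ∧
    x 0 = 0 ∧ x (Fin.last c) = n ∧ y 0 = 0 ∧ y (Fin.last r) = n ∧
    ∀ (i : Fin c) (j : Fin r),
      (M i j = 0 → ∀ p : Fin n, ¬ InCell x y σ i j p) ∧
      (M i j = 1 → ∀ p q : Fin n,
        InCell x y σ i j p → InCell x y σ i j q → p < q → σ p < σ q) ∧
      (M i j = -1 → ∀ p q : Fin n,
        InCell x y σ i j p → InCell x y σ i j q → p < q → σ q < σ p) ∧
      (M i j = 2 → ∀ p q : Fin n,
        InCell x y σ i j p → InCell x y σ i j q → p = q)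

/-- A permutation is simple if its only intervals (sets of consecutive
positions mapped to consecutive values) are singletons and the whole domain. -/
def IsSimple {n : ℕ} (σ : Equiv.Perm (Fin n)) : Prop :=
  ∀ a b : Fin n, a ≤ b →
    (∃ c d : Fin n, (⇑σ) '' Set.Icc a b = Set.Icc c d) →
    a = b ∨ Set.Icc a b = (Set.univ : Set (Fin n))

/-- `σ` is sum-decomposable: a proper nonempty prefix of positions is mapped
to the corresponding prefix of values. -/
def SumDecomposable {n : ℕ} (σ : Equiv.Perm (Fin n)) : Prop :=
  ∃ k : ℕ, 0 < k ∧ k < n ∧ ∀ i : Fin n, ((i : ℕ) < k ↔ ((σ i : Fin n) : ℕ) < k)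

/-- `σ` is skew-decomposable: a proper nonempty prefix of positions is mapped
to the corresponding suffix of values. -/
def SkewDecomposable {n : ℕ} (σ : Equiv.Perm (Fin n)) : Prop :=
  ∃ k : ℕ, 0 < k ∧ k < n ∧ ∀ i : Fin n, ((i : ℕ) < k ↔ n - k ≤ ((σ i : Fin n) : ℕ))

/-- The number of descents of `σ`. -/
noncomputable def descentCount {n : ℕ} (σ : Equiv.Perm (Fin n)) : ℕ :=
  Nat.card {i : Fin n // ∃ j : Fin n, (j : ℕ) = (i : ℕ) + 1 ∧ σ j < σ i}

def gridRow : Fin 2 → Fin 1 → ℤ :=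
  ![![1], ![1]]
def gridCol : Fin 1 → Fin 2 → ℤ :=
  ![![1, 1]]

namespace AvHelp

variable {n : ℕ}

@[simp] lemma fin3_mk2 (h : 2 < 3) : (⟨2, h⟩ : Fin 3) = 2 := rfl
@[simp] lemma fin4_mk2 (h : 2 < 4) : (⟨2, h⟩ : Fin 4) = 2 := rfl
@[simp] lemma fin4_mk3 (h : 3 < 4) : (⟨3, h⟩ : Fin 4) = 3 := rfl
@[simp] lemma vec3_2 {α : Type*} (a b c : α) : ![a, b, c] 2 = c := rfl
@[simp] lemma vec4_2 {α : Type*} (a b c d : α) : ![a, b, c, d] 2 = c := rfl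
@[simp] lemma vec4_3 {α : Type*} (a b c d : α) : ![a, b, c, d] 3 = d := rfl

lemma contains321 (σ : Equiv.Perm (Fin n)) (a b c : Fin n)
    (hab : a < b) (hbc : b < c) (h1 : σ b < σ a) (h2 : σ c < σ b) :
    Contains σ ![3, 2, 1] := by
  have h3 : σ c < σ a := h2.trans h1
  refine ⟨![a, b, c], ?_, ?_⟩
  · intro i j hij
    fin_cases i <;> fin_cases j <;>
      simp only [Fin.mk_zero, Fin.mk_one, fin3_mk2, Matrix.cons_val_zero,
        Matrix.cons_val_one, Matrix.head_cons, vec3_2] <;>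
      first
        | exact absurd hij (by decide)
        | exact hab
        | exact hbc
        | exact hab.trans hbc
  · intro i j
    fin_cases i <;> fin_cases j <;>
      simp only [Fin.mk_zero, Fin.mk_one, fin3_mk2, Matrix.cons_val_zero,
        Matrix.cons_val_one, Matrix.head_cons, vec3_2] <;>
      constructor <;> intro h <;>
      first
        | exact absurd h (lt_irrefl _)
        | exact absurd h (asymm h1)
        | exact absurd h (asymm h2)
        | exact absurd h (asymm h3)
        | exact h1
        | exact h2
        | exact h3
        | exact absurd h (by omega)
        | omega

lemma contains2143 (σ : Equiv.Perm (Fin n)) (a b c d : Fin n)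
    (hab : a < b) (hbc : b < c) (hcd : c < d)
    (h1 : σ b < σ a) (h2 : σ a < σ d) (h3 : σ d < σ c) :
    Contains σ ![2, 1, 4, 3] := by
  have hac := h2.trans h3
  have hbd : σ b < σ d := h1.trans h2
  have hbc2 : σ b < σ c := hbd.trans h3
  refine ⟨![a, b, c, d], ?_, ?_⟩
  · intro i j hij
    fin_cases i <;> fin_cases j <;>
      simp only [Fin.mk_zero, Fin.mk_one, fin4_mk2, fin4_mk3, Matrix.cons_val_zero,
        Matrix.cons_val_one, Matrix.head_cons, vec4_2, vec4_3] <;>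
      first
        | exact absurd hij (by decide)
        | exact hab
        | exact hbc
        | exact hcd
        | exact hab.trans hbc
        | exact hbc.trans hcd
        | exact (hab.trans hbc).trans hcd
  · intro i j
    fin_cases i <;> fin_cases j <;>
      simp only [Fin.mk_zero, Fin.mk_one, fin4_mk2, fin4_mk3, Matrix.cons_val_zero,
        Matrix.cons_val_one, Matrix.head_cons, vec4_2, vec4_3] <;>
      constructor <;> intro h <;>
      first
        | exact absurd h (lt_irrefl _)
        | exact absurd h (asymm h1)
        | exact absurd h (asymm h2)
        | exact absurd h (asymm h3)
        | exact absurd h (asymm hac)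
        | exact absurd h (asymm hbd)
        | exact absurd h (asymm hbc2)
        | exact h1
        | exact h2
        | exact h3
        | exact hac
        | exact hbd
        | exact hbc2
        | exact absurd h (by omega)
        | omega

/-- two adjacent descents interact -/
lemma lemD (σ : Equiv.Perm (Fin n))
    (hA : Avoids σ ![3, 2, 1]) (hB : Avoids σ ![2, 1, 4, 3])
    (d d' e e' : Fin n) (hd' : (d' : ℕ) = (d : ℕ) + 1) (he' : (e' : ℕ) = (e : ℕ) + 1)
    (hdd : σ d' < σ d) (hee : σ e' < σ e) (hde : d < e) :
    σ d < σ e ∧ σ e' < σ d ∧ σ d' < σ e' := by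
  have hde' : (d : ℕ) < (e : ℕ) := hde
  have hee'lt : e < e' := by rw [Fin.lt_def]; omega
  have hd'e : d' ≤ e := by rw [Fin.le_def]; omega
  have h1 : σ d < σ e := by
    by_contra h
    push_neg at h
    have hne : σ e ≠ σ d := fun hh => absurd (σ.injective hh) (by
      intro hh2; rw [hh2] at hde'; omega)
    have : σ e < σ d := lt_of_le_of_ne h hne
    exact hA (contains321 σ d e e' hde hee'lt this hee)
  have h2 : σ e' < σ d := by
    by_contra h
    push_neg at h
    rcases eq_or_lt_of_le hd'e with heq | hlt
    · rw [heq] at hdd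
      exact absurd (h1.trans hdd) (lt_irrefl _)
    · have hdd' : d < d' := by rw [Fin.lt_def]; omega
      have hne : σ d ≠ σ e' := fun hh => absurd (σ.injective hh) (by
        intro hh2; rw [hh2] at hd'; omega)
      have hde2 : σ d < σ e' := lt_of_le_of_ne h hne
      exact hB (contains2143 σ d d' e e' hdd' hlt hee'lt hdd hde2 hee)
  have h3 : σ d' < σ e' := by
    by_contra h
    push_neg at h
    have hne : σ e' ≠ σ d' := fun hh => absurd (σ.injective hh) (by
      intro hh2; rw [hh2, hd'] at he'; omega)
    have he'd' : σ e' < σ d' := lt_of_le_of_ne h hne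
    have hdd' : d < d' := by rw [Fin.lt_def]; omega
    have hd'e' : d' < e' := by rw [Fin.lt_def]; omega
    exact hA (contains321 σ d d' e' hdd' hd'e' hdd he'd')
  exact ⟨h1, h2, h3⟩

/-- inside every inversion there is an adjacent descent dominating it -/
lemma lemI (σ : Equiv.Perm (Fin n)) (hA : Avoids σ ![3, 2, 1])
    (p q : Fin n) (hpq : p < q) (hinv : σ q < σ p) :
    ∃ d d' : Fin n, (d' : ℕ) = (d : ℕ) + 1 ∧ p ≤ d ∧ d' ≤ q ∧
      σ d' < σ d ∧ σ p ≤ σ d ∧ σ d' ≤ σ q := by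
  classical
  set S : Finset (Fin n) := Finset.univ.filter (fun t => p ≤ t ∧ t < q ∧ σ p ≤ σ t) with hS
  have hpS : p ∈ S := by
    simp [hS, hpq]
  have hne : S.Nonempty := ⟨p, hpS⟩
  set d : Fin n := S.max' hne with hd
  have hdS : d ∈ S := S.max'_mem hne
  have hdprop : p ≤ d ∧ d < q ∧ σ p ≤ σ d := by
    simpa [hS] using hdS
  have hd1n : (d : ℕ) + 1 < n := by
    have := q.isLt
    have : (d : ℕ) < (q : ℕ) := hdprop.2.1
    omega
  set d' : Fin n := ⟨(d : ℕ) + 1, hd1n⟩ with hd'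
  have hd'q : d' ≤ q := by
    have : (d : ℕ) < (q : ℕ) := hdprop.2.1
    rw [Fin.le_def]; simp [hd']; omega
  have hcase : d' = q ∨ d' < q := eq_or_lt_of_le hd'q
  have hd'notS : d' < q → σ d' < σ p := by
    intro hlt
    by_contra h
    push_neg at h
    have : d' ∈ S := by
      simp only [hS, Finset.mem_filter, Finset.mem_univ, true_and]
      refine ⟨le_trans hdprop.1 ?_, hlt, h⟩
      rw [Fin.le_def]; simp [hd']
    have := S.le_max' d' this
    rw [← hd] at this
    have : (d' : ℕ) ≤ (d : ℕ) := this
    simp [hd'] at this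
  rcases hcase with heq | hlt
  · refine ⟨d, d', rfl, hdprop.1, hd'q, ?_, hdprop.2.2, ?_⟩
    · rw [heq]; exact lt_of_lt_of_le hinv hdprop.2.2
    · rw [heq]
  · have h1 : σ d' < σ p := hd'notS hlt
    have h2 : σ d' < σ d := lt_of_lt_of_le h1 hdprop.2.2
    refine ⟨d, d', rfl, hdprop.1, hd'q, h2, hdprop.2.2, ?_⟩
    by_contra h
    push_neg at h
    have hdd' : d < d' := by rw [Fin.lt_def]; simp [hd']
    exact hA (contains321 σ d d' q hdd' hlt h2 h)

end AvHelp

namespace AvHelp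
variable {n : ℕ}

/-- KEY: with two descents, every inversion bottom is below every inversion top. -/
lemma key (σ : Equiv.Perm (Fin n))
    (hA : Avoids σ ![3, 2, 1]) (hB : Avoids σ ![2, 1, 4, 3])
    (u u' v v' : Fin n) (hu' : (u' : ℕ) = (u : ℕ) + 1) (hv' : (v' : ℕ) = (v : ℕ) + 1)
    (huu : σ u' < σ u) (hvv : σ v' < σ v) (huv : u < v)
    (p1 q1 p2 q2 : Fin n) (h11 : p1 < q1) (hi1 : σ q1 < σ p1)
    (h22 : p2 < q2) (hi2 : σ q2 < σ p2) :
    σ q1 < σ p2 := by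
  by_contra hcon
  push_neg at hcon   -- σ p2 ≤ σ q1
  -- strictness
  rcases eq_or_lt_of_le hcon with heq | hlt
  · -- p2 = q1
    have : p2 = q1 := σ.injective heq
    subst this
    exact hA (contains321 σ p1 p2 q2 h11 h22 hi1 hi2)
  -- now σ q2 < σ p2 < σ q1 < σ p1
  have hq1p2 : p2 < q1 := by
    rcases lt_trichotomy q1 p2 with h | h | h
    · exact (hA (contains321 σ p1 q1 p2 h11 h hi1 hlt)).elim
    · exfalso; rw [← h] at hlt; exact absurd hlt (lt_irrefl _)
    · exact h
  have hp : p2 < p1 := by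
    rcases lt_trichotomy p1 p2 with h | h | h
    · exact (hA (contains321 σ p1 p2 q2 h h22 (hlt.trans hi1) hi2)).elim
    · exfalso; rw [h] at hi1
      exact absurd (hlt.trans hi1) (lt_irrefl _)
    · exact h
  have hq2p1 : p1 < q2 := by
    rcases lt_trichotomy q2 p1 with h | h | h
    · exact (hB (contains2143 σ p2 q2 p1 q1 h22 h h11 hi2 hlt hi1)).elim
    · exfalso; rw [h] at hi2
      exact absurd ((hi2.trans hlt).trans hi1) (lt_irrefl _)
    · exact h
  have hq : q2 < q1 := by
    rcases lt_trichotomy q1 q2 with h | h | h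
    · exact (hA (contains321 σ p1 q1 q2 h11 h hi1 (hi2.trans hlt))).elim
    · exfalso; rw [h] at hlt
      exact absurd (hlt.trans hi2) (lt_irrefl _)
    · exact h
  -- main configuration: p2 < p1 < q2 < q1, σ q2 < σ p2 < σ q1 < σ p1
  -- get adjacent descent inside inversion (p1, q2)
  obtain ⟨d, d', hdn, hp1d, hd'q2, hdd, hσp1d, hσd'q2⟩ :=
    lemI σ hA p1 q2 hq2p1 ((hi2.trans hlt).trans hi1)
  -- facts about the configuration
  have hσdq1 : σ q1 < σ d := lt_of_lt_of_le hi1 hσp1d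
  have hσd'p2 : σ d' < σ p2 := lt_of_le_of_lt hσd'q2 hi2
  have hp2d' : p2 < d' := by
    have h1 : (p2:ℕ) < (p1:ℕ) := hp
    have h2 : (p1:ℕ) ≤ (d:ℕ) := hp1d
    rw [Fin.lt_def]; omega
  have hdq1 : d < q1 := by
    have h1 : (d':ℕ) ≤ (q2:ℕ) := hd'q2
    have h2 : (q2:ℕ) < (q1:ℕ) := hq
    rw [Fin.lt_def]; omega
  have hd'q1 : d' < q1 := by
    have h1 : (d':ℕ) ≤ (q2:ℕ) := hd'q2
    have h2 : (q2:ℕ) < (q1:ℕ) := hq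
    rw [Fin.lt_def]; omega
  -- there is a second descent e ≠ d
  have hsecond : ∃ e e' : Fin n, (e' : ℕ) = (e : ℕ) + 1 ∧ σ e' < σ e ∧ e ≠ d := by
    by_cases h : u = d
    · refine ⟨v, v', hv', hvv, ?_⟩
      intro hh; rw [hh, ← h] at huv; exact absurd huv (lt_irrefl _)
    · exact ⟨u, u', hu', huu, h⟩
  obtain ⟨e, e', hen, hee, hed⟩ := hsecond
  rcases lt_or_gt_of_ne hed with hlt2 | hlt2
  · -- e < d
    obtain ⟨hD1, hD2, hD3⟩ := lemD σ hA hB e e' d d' hen hdn hee hdd hlt2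
    -- σ e < σ d, σ d' < σ e, σ e' < σ d'
    have he'd : e' < d := by
      have h1 : (e:ℕ) < (d:ℕ) := hlt2
      have h2 : e' ≠ d := by
        intro hh
        rw [hh] at hD3
        exact absurd (hD3.trans hdd) (lt_irrefl _)
      rw [Fin.lt_def]
      have h3 : (e':ℕ) ≤ (d:ℕ) := by omega
      rcases eq_or_lt_of_le h3 with h4 | h4
      · exact absurd (Fin.ext h4) h2
      · exact h4
    rcases lt_trichotomy e p2 with h5 | h5 | h5
    · -- e < p2
      rcases lt_trichotomy (σ e) (σ p2) with h6 | h6 | h6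
      · -- 2143 at (e, e', d, q1)
        have hee' : e < e' := by rw [Fin.lt_def]; omega
        exact hB (contains2143 σ e e' d q1 hee' he'd hdq1 hee (h6.trans hlt) hσdq1)
      · exact absurd (σ.injective h6) (by intro hh; rw [hh] at h5; exact absurd h5 (lt_irrefl _))
      · -- 321 at (e, p2, d')
        exact hA (contains321 σ e p2 d' h5 hp2d' h6 hσd'p2)
    · -- e = p2
      subst h5
      have hp2e' : e < e' := by rw [Fin.lt_def]; omega
      exact hB (contains2143 σ e e' d q1 hp2e' he'd hdq1 hee hlt hσdq1)
    · -- p2 < e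
      have hp2e' : p2 < e' := by
        have : (p2:ℕ) < (e:ℕ) := h5
        rw [Fin.lt_def]; omega
      have hσe'p2 : σ e' < σ p2 := (hD3.trans_le hσd'q2).trans hi2
      exact hB (contains2143 σ p2 e' d q1 hp2e' he'd hdq1 hσe'p2 hlt hσdq1)
  · -- d < e
    obtain ⟨hD1, hD2, hD3⟩ := lemD σ hA hB d d' e e' hdn hen hdd hee hlt2
    -- σ d < σ e, σ e' < σ d, σ d' < σ e'
    have hd'e : d' < e := by
      have h1 : (d:ℕ) < (e:ℕ) := hlt2
      have h2 : d' ≠ e := by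
        intro hh
        rw [← hh] at hD1
        exact absurd (hdd.trans hD1) (lt_irrefl _)
      rw [Fin.lt_def]
      have h3 : (d':ℕ) ≤ (e:ℕ) := by omega
      rcases eq_or_lt_of_le h3 with h4 | h4
      · exact absurd (Fin.ext h4) h2
      · exact h4
    have hσeq1 : σ q1 < σ e := hσdq1.trans hD1
    rcases lt_trichotomy e q1 with h5 | h5 | h5
    · -- e < q1 : 2143 at (p2, d', e, q1)
      exact hB (contains2143 σ p2 d' e q1 hp2d' hd'e h5 hσd'p2 hlt hσeq1)
    · exfalso; rw [h5] at hσeq1; exact absurd hσeq1 (lt_irrefl _)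
    · -- q1 < e
      have hq1e' : q1 < e' := by
        have : (q1:ℕ) < (e:ℕ) := h5
        rw [Fin.lt_def]; omega
      rcases lt_trichotomy (σ e') (σ q1) with h6 | h6 | h6
      · -- 321 at (d, q1, e')
        exact hA (contains321 σ d q1 e' hdq1 hq1e' hσdq1 h6)
      · exact absurd (σ.injective h6) (by intro hh; rw [hh] at hq1e'; exact absurd hq1e' (lt_irrefl _))
      · -- 2143 at (p2, d', e, e')
        have hee' : e < e' := by rw [Fin.lt_def]; omega
        exact hB (contains2143 σ p2 d' e e' hp2d' hd'e hee' hσd'p2 (hlt.trans h6) hee)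

end AvHelp

namespace AvHelp
variable {n : ℕ}

lemma mono_seg (σ : Equiv.Perm (Fin n)) :
    ∀ k : ℕ, ∀ p q : Fin n, (q : ℕ) = (p : ℕ) + k + 1 →
      (∀ t t' : Fin n, p ≤ t → (t' : ℕ) = (t : ℕ) + 1 → t' ≤ q → σ t < σ t') →
      σ p < σ q := by
  intro k
  induction k with
  | zero =>
    intro p q hq hnd
    exact hnd p q le_rfl (by omega) le_rfl
  | succ k ih =>
    intro p q hq hnd
    have hlt : (p : ℕ) + 1 < n := by have := q.isLt; omega
    set p' : Fin n := ⟨(p : ℕ) + 1, hlt⟩ with hp'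
    have h1 : σ p < σ p' :=
      hnd p p' le_rfl rfl (by rw [Fin.le_def]; simp [hp']; omega)
    have h2 : σ p' < σ q := by
      apply ih p' q (by simp [hp']; omega)
      intro t t' ht ht' ht'q
      exact hnd t t' (le_trans (by rw [Fin.le_def]; simp [hp']) ht) ht' ht'q
    exact h1.trans h2

lemma incr_on (σ : Equiv.Perm (Fin n)) (p q : Fin n) (hpq : p < q)
    (h : ∀ t t' : Fin n, p ≤ t → (t' : ℕ) = (t : ℕ) + 1 → t' ≤ q → ¬ σ t' < σ t) :
    σ p < σ q := by
  have hpq' : (p : ℕ) < (q : ℕ) := hpq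
  apply mono_seg σ ((q : ℕ) - (p : ℕ) - 1) p q (by omega)
  intro t t' ht ht' ht'q
  have hne : σ t ≠ σ t' := fun e => by
    have h2 := σ.injective e
    rw [h2] at ht'
    omega
  rcases lt_or_gt_of_ne hne with h' | h'
  · exact h'
  · exact absurd h' (h t t' ht ht' ht'q)

lemma mono3 {a b c : ℕ} (h1 : a ≤ b) (h2 : b ≤ c) : Monotone ![a, b, c] := by
  intro i j hij
  have hij' : (i : ℕ) ≤ (j : ℕ) := hij
  fin_cases i <;> fin_cases j <;>
    simp_all only [Fin.mk_zero, Fin.mk_one, fin3_mk2, Matrix.cons_val_zero,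
      Matrix.cons_val_one, Matrix.head_cons, vec3_2, le_refl] <;>
    omega

lemma mono2 {a b : ℕ} (h : a ≤ b) : Monotone ![a, b] := by
  intro i j hij
  have hij' : (i : ℕ) ≤ (j : ℕ) := hij
  fin_cases i <;> fin_cases j <;>
    simp_all only [Fin.mk_zero, Fin.mk_one, Matrix.cons_val_zero,
      Matrix.cons_val_one, Matrix.head_cons, le_refl] <;>
    omega

end AvHelp

set_option maxRecDepth 4000 in
theorem av_321_2143_is_union_of_two_grid_classes :
    ∀ (n : ℕ) (σ : Equiv.Perm (Fin n)),
      (Avoids σ ![3, 2, 1] ∧ Avoids σ ![2, 1, 4, 3]) ↔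
        (InGrid gridRow σ ∨ InGrid gridCol σ) := by
  intro n σ
  constructor
  · rintro ⟨hA, hB⟩
    classical
    by_cases htwo : ∃ d e : Fin n, d < e ∧
        (∃ hd : (d : ℕ) + 1 < n, σ ⟨(d : ℕ) + 1, hd⟩ < σ d) ∧
        (∃ he : (e : ℕ) + 1 < n, σ ⟨(e : ℕ) + 1, he⟩ < σ e)
    · -- two descents : value cut, gridCol
      right
      obtain ⟨d, e, hde, ⟨hd1, hdd⟩, ⟨he1, hee⟩⟩ := htwo
      set d' : Fin n := ⟨(d : ℕ) + 1, hd1⟩ with hd'def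
      set e' : Fin n := ⟨(e : ℕ) + 1, he1⟩ with he'def
      set B : Finset (Fin n) :=
        Finset.univ.filter (fun v => ∃ p q : Fin n, p < q ∧ σ q < σ p ∧ σ q = v) with hBdef
      have hdd' : d < d' := by rw [Fin.lt_def]; simp [hd'def]
      have hBne : B.Nonempty := by
        refine ⟨σ d', ?_⟩
        simp only [hBdef, Finset.mem_filter, Finset.mem_univ, true_and]
        exact ⟨d, d', hdd', hdd, rfl⟩
      set w : Fin n := B.max' hBne with hwdef
      set m : ℕ := (w : ℕ) + 1 with hmdef
      have hmn : m ≤ n := w.isLt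
      have hK1 : ∀ p q : Fin n, p < q → σ q < σ p → ((σ q : Fin n) : ℕ) < m := by
        intro p q h hinv
        have hmem : σ q ∈ B := by
          simp only [hBdef, Finset.mem_filter, Finset.mem_univ, true_and]
          exact ⟨p, q, h, hinv, rfl⟩
        have h2 : ((σ q : Fin n) : ℕ) ≤ (w : ℕ) := B.le_max' _ hmem
        omega
      have hK2 : ∀ p q : Fin n, p < q → σ q < σ p → m ≤ ((σ p : Fin n) : ℕ) := by
        intro p q h hinv
        have hmem : w ∈ B := B.max'_mem hBne
        simp only [hBdef, Finset.mem_filter, Finset.mem_univ, true_and] at hmem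
        obtain ⟨p1, q1, h1, hinv1, heq⟩ := hmem
        have hkey := AvHelp.key σ hA hB d d' e e' rfl rfl hdd hee hde p1 q1 p q h1 hinv1 h hinv
        rw [heq] at hkey
        have h3 : (w : ℕ) < ((σ p : Fin n) : ℕ) := hkey
        omega
      refine ⟨![0, n], ![0, m, n], AvHelp.mono2 (Nat.zero_le n),
        AvHelp.mono3 (Nat.zero_le m) hmn, rfl, rfl, rfl, rfl, ?_⟩
      intro i j
      fin_cases i <;> fin_cases j <;>
        refine ⟨fun h0 => absurd h0 (by decide), fun _ p q hp hq hpq => ?_,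
          fun hmm => absurd hmm (by decide), fun hmm => absurd hmm (by decide)⟩
      · -- row 0 : small values
        have hvp : ((σ p : Fin n) : ℕ) < m := hp.2.2.2
        by_contra hc
        push_neg at hc
        have hne : σ q ≠ σ p := fun hh => by
          have := σ.injective hh
          rw [this] at hpq
          exact absurd hpq (lt_irrefl _)
        have hinv : σ q < σ p := lt_of_le_of_ne hc hne
        have := hK2 p q hpq hinv
        omega
      · -- row 1 : large values
        have hvq : m ≤ ((σ q : Fin n) : ℕ) := hq.2.2.1
        by_contra hc
        push_neg at hc
        have hne : σ q ≠ σ p := fun hh => by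
          have := σ.injective hh
          rw [this] at hpq
          exact absurd hpq (lt_irrefl _)
        have hinv : σ q < σ p := lt_of_le_of_ne hc hne
        have := hK1 p q hpq hinv
        omega
    · -- at most one descent : position cut, gridRow
      left
      have mkdesc : ∀ t t' : Fin n, (t' : ℕ) = (t : ℕ) + 1 → σ t' < σ t →
          ∃ hd : (t : ℕ) + 1 < n, σ ⟨(t : ℕ) + 1, hd⟩ < σ t := by
        intro t t' ht' hdt
        have hd : (t : ℕ) + 1 < n := by have := t'.isLt; omega
        have heq : (⟨(t : ℕ) + 1, hd⟩ : Fin n) = t' := Fin.ext (by simp [ht'])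
        exact ⟨hd, by rw [heq]; exact hdt⟩
      obtain ⟨k, hkn, Q⟩ : ∃ k : ℕ, k ≤ n ∧ ∀ t t' : Fin n,
          (t' : ℕ) = (t : ℕ) + 1 → σ t' < σ t → (t : ℕ) + 1 = k := by
        by_cases hone : ∃ t : Fin n, ∃ hd : (t : ℕ) + 1 < n, σ ⟨(t : ℕ) + 1, hd⟩ < σ t
        · obtain ⟨t0, ht0n, ht0⟩ := hone
          refine ⟨(t0 : ℕ) + 1, ht0n.le, ?_⟩
          intro t t' ht' hdt
          rcases lt_trichotomy t t0 with h | h | h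
          · exact absurd ⟨t, t0, h, mkdesc t t' ht' hdt, ht0n, ht0⟩ htwo
          · rw [h]
          · exact absurd ⟨t0, t, h, ⟨ht0n, ht0⟩, mkdesc t t' ht' hdt⟩ htwo
        · refine ⟨0, Nat.zero_le n, ?_⟩
          intro t t' ht' hdt
          exact absurd ⟨t, mkdesc t t' ht' hdt⟩ hone
      refine ⟨![0, k, n], ![0, n], AvHelp.mono3 (Nat.zero_le k) hkn,
        AvHelp.mono2 (Nat.zero_le n), rfl, rfl, rfl, rfl, ?_⟩
      intro i j
      fin_cases i <;> fin_cases j <;>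
        refine ⟨fun h0 => absurd h0 (by decide), fun _ p q hp hq hpq => ?_,
          fun hmm => absurd hmm (by decide), fun hmm => absurd hmm (by decide)⟩
      · -- column 0 : positions < k
        have hqk : (q : ℕ) < k := hq.2.1
        apply AvHelp.incr_on σ p q hpq
        intro t t' ht hadj ht'q hdesc
        have h1 : (t : ℕ) + 1 = k := Q t t' hadj hdesc
        have h2 : (t' : ℕ) ≤ (q : ℕ) := ht'q
        omega
      · -- column 1 : positions ≥ k
        have hpk : k ≤ (p : ℕ) := hp.1
        apply AvHelp.incr_on σ p q hpq
        intro t t' ht hadj ht'q hdesc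
        have h1 : (t : ℕ) + 1 = k := Q t t' hadj hdesc
        have h2 : (p : ℕ) ≤ (t : ℕ) := ht
        omega
  · rintro (⟨x, y, hxm, hym, hx0, hxl, hy0, hyl, hcell⟩ | ⟨x, y, hxm, hym, hx0, hxl, hy0, hyl, hcell⟩)
    · -- gridRow: split by position at x 1
      have hc0 := (hcell 0 0).2.1 rfl
      have hc1 := (hcell 1 0).2.1 rfl
      have mem0 : ∀ p : Fin n, (p : ℕ) < x 1 → InCell x y σ 0 0 p := by
        intro p hp
        refine ⟨?_, ?_, ?_, ?_⟩
        · show x (Fin.castSucc 0) ≤ (p : ℕ)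
          rw [show Fin.castSucc (0 : Fin 2) = (0 : Fin 3) from rfl, hx0]
          exact Nat.zero_le _
        · exact hp
        · show y (Fin.castSucc 0) ≤ _
          rw [show Fin.castSucc (0 : Fin 1) = (0 : Fin 2) from rfl, hy0]
          exact Nat.zero_le _
        · show _ < y (Fin.succ 0)
          rw [show Fin.succ (0 : Fin 1) = Fin.last 1 from rfl, hyl]
          exact (σ p).isLt
      have mem1 : ∀ p : Fin n, x 1 ≤ (p : ℕ) → InCell x y σ 1 0 p := by
        intro p hp
        refine ⟨?_, ?_, ?_, ?_⟩
        · exact hp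
        · show (p : ℕ) < x (Fin.succ 1)
          rw [show Fin.succ (1 : Fin 2) = Fin.last 2 from rfl, hxl]
          exact p.isLt
        · show y (Fin.castSucc 0) ≤ _
          rw [show Fin.castSucc (0 : Fin 1) = (0 : Fin 2) from rfl, hy0]
          exact Nat.zero_le _
        · show _ < y (Fin.succ 0)
          rw [show Fin.succ (0 : Fin 1) = Fin.last 1 from rfl, hyl]
          exact (σ p).isLt
      constructor
      · rintro ⟨f, hf, hiff⟩
        have h10 : σ (f 1) < σ (f 0) := (hiff 1 0).mpr (by decide)
        have h21 : σ (f 2) < σ (f 1) := (hiff 2 1).mpr (by decide)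
        have hf01 : f 0 < f 1 := hf (by decide)
        have hf12 : f 1 < f 2 := hf (by decide)
        rcases lt_or_ge ((f 1 : Fin n) : ℕ) (x 1) with hcase | hcase
        · have h0 : ((f 0 : Fin n) : ℕ) < x 1 :=
            lt_trans (show ((f 0 : Fin n) : ℕ) < ((f 1 : Fin n) : ℕ) from hf01) hcase
          exact absurd (hc0 (f 0) (f 1) (mem0 _ h0) (mem0 _ hcase) hf01) (asymm h10)
        · have h2 : x 1 ≤ ((f 2 : Fin n) : ℕ) :=
            le_trans hcase (le_of_lt (show ((f 1 : Fin n) : ℕ) < ((f 2 : Fin n) : ℕ) from hf12))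
          exact absurd (hc1 (f 1) (f 2) (mem1 _ hcase) (mem1 _ h2) hf12) (asymm h21)
      · rintro ⟨f, hf, hiff⟩
        have h10 : σ (f 1) < σ (f 0) := (hiff 1 0).mpr (by decide)
        have h32 : σ (f 3) < σ (f 2) := (hiff 3 2).mpr (by decide)
        have hf01 : f 0 < f 1 := hf (by decide)
        have hf12 : f 1 < f 2 := hf (by decide)
        have hf23 : f 2 < f 3 := hf (by decide)
        rcases lt_or_ge ((f 1 : Fin n) : ℕ) (x 1) with hcase | hcase
        · have h0 : ((f 0 : Fin n) : ℕ) < x 1 :=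
            lt_trans (show ((f 0 : Fin n) : ℕ) < ((f 1 : Fin n) : ℕ) from hf01) hcase
          exact absurd (hc0 (f 0) (f 1) (mem0 _ h0) (mem0 _ hcase) hf01) (asymm h10)
        · have h2 : x 1 ≤ ((f 2 : Fin n) : ℕ) :=
            le_trans hcase (le_of_lt (show ((f 1 : Fin n) : ℕ) < ((f 2 : Fin n) : ℕ) from hf12))
          have h3 : x 1 ≤ ((f 3 : Fin n) : ℕ) :=
            le_trans h2 (le_of_lt (show ((f 2 : Fin n) : ℕ) < ((f 3 : Fin n) : ℕ) from hf23))
          exact absurd (hc1 (f 2) (f 3) (mem1 _ h2) (mem1 _ h3) hf23) (asymm h32)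
    · -- gridCol: split by value at y 1
      have hc0 := (hcell 0 0).2.1 rfl
      have hc1 := (hcell 0 1).2.1 rfl
      have memr0 : ∀ p : Fin n, ((σ p : Fin n) : ℕ) < y 1 → InCell x y σ 0 0 p := by
        intro p hp
        refine ⟨?_, ?_, ?_, ?_⟩
        · show x (Fin.castSucc 0) ≤ (p : ℕ)
          rw [show Fin.castSucc (0 : Fin 1) = (0 : Fin 2) from rfl, hx0]
          exact Nat.zero_le _
        · show (p : ℕ) < x (Fin.succ 0)
          rw [show Fin.succ (0 : Fin 1) = Fin.last 1 from rfl, hxl]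
          exact p.isLt
        · show y (Fin.castSucc 0) ≤ _
          rw [show Fin.castSucc (0 : Fin 2) = (0 : Fin 3) from rfl, hy0]
          exact Nat.zero_le _
        · exact hp
      have memr1 : ∀ p : Fin n, y 1 ≤ ((σ p : Fin n) : ℕ) → InCell x y σ 0 1 p := by
        intro p hp
        refine ⟨?_, ?_, ?_, ?_⟩
        · show x (Fin.castSucc 0) ≤ (p : ℕ)
          rw [show Fin.castSucc (0 : Fin 1) = (0 : Fin 2) from rfl, hx0]
          exact Nat.zero_le _
        · show (p : ℕ) < x (Fin.succ 0)
          rw [show Fin.succ (0 : Fin 1) = Fin.last 1 from rfl, hxl]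
          exact p.isLt
        · exact hp
        · show _ < y (Fin.succ 1)
          rw [show Fin.succ (1 : Fin 2) = Fin.last 2 from rfl, hyl]
          exact (σ p).isLt
      constructor
      · rintro ⟨f, hf, hiff⟩
        have h10 : σ (f 1) < σ (f 0) := (hiff 1 0).mpr (by decide)
        have h21 : σ (f 2) < σ (f 1) := (hiff 2 1).mpr (by decide)
        have hf01 : f 0 < f 1 := hf (by decide)
        have hf12 : f 1 < f 2 := hf (by decide)
        rcases le_or_gt (y 1) ((σ (f 1) : Fin n) : ℕ) with hcase | hcase
        · have h0 : y 1 ≤ ((σ (f 0) : Fin n) : ℕ) :=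
            le_trans hcase
              (le_of_lt (show ((σ (f 1) : Fin n) : ℕ) < ((σ (f 0) : Fin n) : ℕ) from h10))
          exact absurd (hc1 (f 0) (f 1) (memr1 _ h0) (memr1 _ hcase) hf01) (asymm h10)
        · have h2 : ((σ (f 2) : Fin n) : ℕ) < y 1 :=
            lt_trans (show ((σ (f 2) : Fin n) : ℕ) < ((σ (f 1) : Fin n) : ℕ) from h21) hcase
          exact absurd (hc0 (f 1) (f 2) (memr0 _ hcase) (memr0 _ h2) hf12) (asymm h21)
      · rintro ⟨f, hf, hiff⟩
        have h10 : σ (f 1) < σ (f 0) := (hiff 1 0).mpr (by decide)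
        have h03 : σ (f 0) < σ (f 3) := (hiff 0 3).mpr (by decide)
        have h32 : σ (f 3) < σ (f 2) := (hiff 3 2).mpr (by decide)
        have hf01 : f 0 < f 1 := hf (by decide)
        have hf23 : f 2 < f 3 := hf (by decide)
        -- σ f1 < y 1 ≤ σ f0 and σ f3 < y 1 ≤ σ f2, contradicting σ f0 < σ f3
        have hs1 : ((σ (f 1) : Fin n) : ℕ) < y 1 := by
          by_contra h
          push_neg at h
          have h0 : y 1 ≤ ((σ (f 0) : Fin n) : ℕ) :=
            le_trans h (le_of_lt (show ((σ (f 1) : Fin n) : ℕ) < _ from h10))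
          exact absurd (hc1 (f 0) (f 1) (memr1 _ h0) (memr1 _ h) hf01) (asymm h10)
        have hs0 : y 1 ≤ ((σ (f 0) : Fin n) : ℕ) := by
          by_contra h
          push_neg at h
          exact absurd (hc0 (f 0) (f 1) (memr0 _ h) (memr0 _ hs1) hf01) (asymm h10)
        have hs3 : ((σ (f 3) : Fin n) : ℕ) < y 1 := by
          by_contra h
          push_neg at h
          have h2 : y 1 ≤ ((σ (f 2) : Fin n) : ℕ) :=
            le_trans h (le_of_lt (show ((σ (f 3) : Fin n) : ℕ) < _ from h32))
          exact absurd (hc1 (f 2) (f 3) (memr1 _ h2) (memr1 _ h) hf23) (asymm h32)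
        have : ((σ (f 0) : Fin n) : ℕ) < ((σ (f 3) : Fin n) : ℕ) := h03
        omega
end

section
/- Let C be the 8-column, 4-row gridding matrix with entry 1 in cells (1,1), (2,3), (3,4), (4,2), (5,3), (6,1), (7,2), (8,4) (cells written as (column, row), columns left to right, rows bottom to top) and 0 elsewhere. Then the monotone grid class Grid(C) is exactly the set of permutations that avoid both 2143 and 4321 and have at most 2 descents, where a descent of a permutation σ of length n is an index i with 1 ≤ i < n and σ(i) > σ(i+1). -/
def gridC : Fin 8 → Fin 4 → ℤ :=
  ![![1, 0, 0, 0], ![0, 0, 1, 0], ![0, 0, 0, 1], ![0, 1, 0, 0],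
    ![0, 0, 1, 0], ![1, 0, 0, 0], ![0, 1, 0, 0], ![0, 0, 0, 1]]


def Rrow : Fin 8 → Fin 4
  | ⟨0, _⟩ => 0
  | ⟨1, _⟩ => 2
  | ⟨2, _⟩ => 3
  | ⟨3, _⟩ => 1
  | ⟨4, _⟩ => 2
  | ⟨5, _⟩ => 0
  | ⟨6, _⟩ => 1
  | ⟨_ + 7, _⟩ => 3

lemma gridC_row : ∀ (i : Fin 8) (j : Fin 4), gridC i j ≠ 0 → j = Rrow i := by decide

lemma gridC_R : ∀ i : Fin 8, gridC i (Rrow i) = 1 := by decide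

lemma gridC_ne_neg : ∀ (i : Fin 8) (j : Fin 4), gridC i j ≠ -1 := by decide

lemma gridC_ne_two : ∀ (i : Fin 8) (j : Fin 4), gridC i j ≠ 2 := by decide

lemma no4desc : ∀ a b c d : Fin 8, a < b → b < c → c < d →
    Rrow b ≤ Rrow a → Rrow c ≤ Rrow b → Rrow d ≤ Rrow c → False := by decide

lemma no2143 : ∀ a b c d : Fin 8, a < b → b ≤ c → c < d →
    Rrow b ≤ Rrow a → Rrow a ≤ Rrow d → Rrow d ≤ Rrow c → False := by decide

lemma noJump3 : ∀ a b c d : Fin 8, a < b → b ≤ c → c < d →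
    Rrow b ≤ Rrow a → Rrow d ≤ Rrow c → (d : ℕ) ≤ 4 → False := by decide

lemma noJumpHigh : ∀ b c d : Fin 8, b ≤ c → c < d →
    Rrow d ≤ Rrow c → 5 ≤ (b : ℕ) → False := by decide

lemma exists_cell {c n : ℕ} (x : Fin (c + 1) → ℕ) (hm : Monotone x)
    (h0 : x 0 = 0) (hl : x (Fin.last c) = n) (p : ℕ) (hp : p < n) :
    ∃ i : Fin c, x i.castSucc ≤ p ∧ p < x i.succ := by
  classical
  set T := Finset.univ.filter (fun i : Fin (c + 1) => x i ≤ p) with hT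
  have hTne : T.Nonempty := ⟨0, by simp [hT, h0]⟩
  set i0 := T.max' hTne with hi0
  have hx : x i0 ≤ p := by
    have := T.max'_mem hTne
    simpa [hT] using this
  have hne : i0 ≠ Fin.last c := by
    intro h; rw [h, hl] at hx; omega
  obtain ⟨i, hi⟩ := Fin.exists_castSucc_eq.mpr hne
  refine ⟨i, by rw [hi]; exact hx, ?_⟩
  by_contra hcon
  push_neg at hcon
  have hmem : i.succ ∈ T := by simp [hT]; exact hcon
  have hle := T.le_max' _ hmem
  rw [← hi0, ← hi] at hle
  exact absurd hle (not_le.mpr (Fin.castSucc_lt_succ (i := i)))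

lemma cell_le {c : ℕ} (x : Fin (c + 1) → ℕ) (hm : Monotone x) {i j : Fin c} {p q : ℕ}
    (hp : p < x i.succ) (hq : x j.castSucc ≤ q) (hpq : q ≤ p) : j ≤ i := by
  by_contra h
  push_neg at h
  have hle : i.succ ≤ j.castSucc := by
    rw [Fin.le_def]
    rw [Fin.lt_def] at h
    simp only [Fin.val_succ, Fin.coe_castSucc]
    omega
  have := hm hle
  omega

lemma notdesc_step {n : ℕ} (σ : Equiv.Perm (Fin n)) (p q : Fin n)
    (hq : (q : ℕ) = (p : ℕ) + 1)
    (h : ¬ ∃ j : Fin n, (j : ℕ) = (p : ℕ) + 1 ∧ σ j < σ p) : σ p < σ q := by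
  push_neg at h
  have h1 := h q hq
  have hpq : p ≠ q := by intro hc; rw [hc] at hq; omega
  exact lt_of_le_of_ne h1 fun hc => hpq (σ.injective hc)

lemma run_lt_aux {n : ℕ} (σ : Equiv.Perm (Fin n)) :
    ∀ (m : ℕ) (p q : Fin n), (q : ℕ) = (p : ℕ) + m + 1 →
      (∀ k : Fin n, (p : ℕ) ≤ (k : ℕ) → (k : ℕ) < (q : ℕ) →
        ¬ ∃ j : Fin n, (j : ℕ) = (k : ℕ) + 1 ∧ σ j < σ k) →
      σ p < σ q := by
  intro m
  induction m with
  | zero =>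
    intro p q hq h
    exact notdesc_step σ p q hq (h p le_rfl (by omega))
  | succ m ih =>
    intro p q hq h
    have hlt : (p : ℕ) + m + 1 < n := by have := q.isLt; omega
    set q' : Fin n := ⟨(p : ℕ) + m + 1, hlt⟩ with hq'
    have hv : (q' : ℕ) = (p : ℕ) + m + 1 := rfl
    have h1 : σ p < σ q' := ih p q' hv (fun k hk1 hk2 => h k hk1 (by omega))
    have h2 : σ q' < σ q := notdesc_step σ q' q (by omega)
      (h q' (by omega) (by omega))
    exact h1.trans h2

lemma run_lt {n : ℕ} (σ : Equiv.Perm (Fin n)) (p q : Fin n) (hpq : (p : ℕ) < (q : ℕ))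
    (h : ∀ k : Fin n, (p : ℕ) ≤ (k : ℕ) → (k : ℕ) < (q : ℕ) →
      ¬ ∃ j : Fin n, (j : ℕ) = (k : ℕ) + 1 ∧ σ j < σ k) : σ p < σ q :=
  run_lt_aux σ ((q : ℕ) - (p : ℕ) - 1) p q (by omega) h

def cut9 (x1 x2 x3 x4 x5 x6 x7 n : ℕ) : Fin 9 → ℕ
  | ⟨0, _⟩ => 0
  | ⟨1, _⟩ => x1
  | ⟨2, _⟩ => x2
  | ⟨3, _⟩ => x3
  | ⟨4, _⟩ => x4
  | ⟨5, _⟩ => x5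
  | ⟨6, _⟩ => x6
  | ⟨7, _⟩ => x7
  | ⟨_ + 8, _⟩ => n

def cut5 (y1 y2 y3 n : ℕ) : Fin 5 → ℕ
  | ⟨0, _⟩ => 0
  | ⟨1, _⟩ => y1
  | ⟨2, _⟩ => y2
  | ⟨3, _⟩ => y3
  | ⟨_ + 4, _⟩ => n

lemma build {n : ℕ} (σ : Equiv.Perm (Fin n)) (x1 x2 x3 x4 x5 x6 x7 y1 y2 y3 : ℕ)
    (hx12 : x1 ≤ x2) (hx23 : x2 ≤ x3) (hx34 : x3 ≤ x4) (hx45 : x4 ≤ x5)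
    (hx56 : x5 ≤ x6) (hx67 : x6 ≤ x7) (hx7n : x7 ≤ n)
    (hy12 : y1 ≤ y2) (hy23 : y2 ≤ y3) (hy3n : y3 ≤ n)
    (hb0 : ∀ p : Fin n, (p : ℕ) < x1 → ((σ p : Fin n) : ℕ) < y1)
    (hb1 : ∀ p : Fin n, x1 ≤ (p : ℕ) → (p : ℕ) < x2 →
      y2 ≤ ((σ p : Fin n) : ℕ) ∧ ((σ p : Fin n) : ℕ) < y3)
    (hb2 : ∀ p : Fin n, x2 ≤ (p : ℕ) → (p : ℕ) < x3 → y3 ≤ ((σ p : Fin n) : ℕ))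
    (hb3 : ∀ p : Fin n, x3 ≤ (p : ℕ) → (p : ℕ) < x4 →
      y1 ≤ ((σ p : Fin n) : ℕ) ∧ ((σ p : Fin n) : ℕ) < y2)
    (hb4 : ∀ p : Fin n, x4 ≤ (p : ℕ) → (p : ℕ) < x5 →
      y2 ≤ ((σ p : Fin n) : ℕ) ∧ ((σ p : Fin n) : ℕ) < y3)
    (hb5 : ∀ p : Fin n, x5 ≤ (p : ℕ) → (p : ℕ) < x6 → ((σ p : Fin n) : ℕ) < y1)
    (hb6 : ∀ p : Fin n, x6 ≤ (p : ℕ) → (p : ℕ) < x7 →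
      y1 ≤ ((σ p : Fin n) : ℕ) ∧ ((σ p : Fin n) : ℕ) < y2)
    (hb7 : ∀ p : Fin n, x7 ≤ (p : ℕ) → y3 ≤ ((σ p : Fin n) : ℕ))
    (hiA : ∀ p q : Fin n, (q : ℕ) < x3 → p < q → σ p < σ q)
    (hiB : ∀ p q : Fin n, x3 ≤ (p : ℕ) → (q : ℕ) < x5 → p < q → σ p < σ q)
    (hiC : ∀ p q : Fin n, x5 ≤ (p : ℕ) → p < q → σ p < σ q) :
    InGrid gridC σ := by
  set x : Fin 9 → ℕ := cut9 x1 x2 x3 x4 x5 x6 x7 n with hxdef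
  set y : Fin 5 → ℕ := cut5 y1 y2 y3 n with hydef
  have hxm : Monotone x := by
    rw [Fin.monotone_iff_le_succ]
    intro i
    obtain ⟨iv, hiv⟩ := i
    interval_cases iv <;> simp [hxdef, cut9, Fin.castSucc, Fin.succ, Fin.castAdd, Fin.castLE] <;> omega
  have hym : Monotone y := by
    rw [Fin.monotone_iff_le_succ]
    intro i
    obtain ⟨iv, hiv⟩ := i
    interval_cases iv <;> simp [hydef, cut5, Fin.castSucc, Fin.succ, Fin.castAdd, Fin.castLE] <;> omega
  have hBand : ∀ (i : Fin 8) (p : Fin n), x i.castSucc ≤ (p : ℕ) → (p : ℕ) < x i.succ →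
      y (Rrow i).castSucc ≤ ((σ p : Fin n) : ℕ) ∧ ((σ p : Fin n) : ℕ) < y (Rrow i).succ := by
    intro i p ha hb
    obtain ⟨iv, hiv⟩ := i
    interval_cases iv
    · exact ⟨Nat.zero_le _, hb0 p hb⟩
    · exact hb1 p ha hb
    · exact ⟨hb2 p ha hb, (σ p).isLt⟩
    · exact hb3 p ha hb
    · exact hb4 p ha hb
    · exact ⟨Nat.zero_le _, hb5 p ha hb⟩
    · exact hb6 p ha hb
    · exact ⟨hb7 p ha, (σ p).isLt⟩
  refine ⟨x, y, hxm, hym, rfl, rfl, rfl, rfl, fun i j => ⟨?_, ?_, ?_, ?_⟩⟩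
  · -- zero cell
    intro h0 p hIn
    obtain ⟨ha, hb, hc, hd⟩ := hIn
    have hB := hBand i p ha hb
    have hne : j ≠ Rrow i := by
      intro h; rw [h, gridC_R] at h0; exact absurd h0 (by norm_num)
    rcases hne.lt_or_gt with hlt | hlt
    · have : y j.succ ≤ y (Rrow i).castSucc := by
        apply hym
        rw [Fin.le_def]
        rw [Fin.lt_def] at hlt
        simp only [Fin.val_succ, Fin.coe_castSucc]
        omega
      omega
    · have : y (Rrow i).succ ≤ y j.castSucc := by
        apply hym
        rw [Fin.le_def]
        rw [Fin.lt_def] at hlt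
        simp only [Fin.val_succ, Fin.coe_castSucc]
        omega
      omega
  · -- one cell
    intro h1 p q hp hq hpq
    obtain ⟨hap, hbp, _, _⟩ := hp
    obtain ⟨haq, hbq, _, _⟩ := hq
    clear h1
    obtain ⟨iv, hiv⟩ := i
    interval_cases iv
    · exact hiA p q (by have : (q:ℕ) < x1 := hbq; omega) hpq
    · exact hiA p q (by have : (q:ℕ) < x2 := hbq; omega) hpq
    · exact hiA p q (by have : (q:ℕ) < x3 := hbq; omega) hpq
    · exact hiB p q (by have : x3 ≤ (p:ℕ) := hap; omega) (by have : (q:ℕ) < x4 := hbq; omega) hpq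
    · exact hiB p q (by have : x4 ≤ (p:ℕ) := hap; omega) (by have : (q:ℕ) < x5 := hbq; omega) hpq
    · exact hiC p q (by have : x5 ≤ (p:ℕ) := hap; omega) hpq
    · exact hiC p q (by have : x6 ≤ (p:ℕ) := hap; omega) hpq
    · exact hiC p q (by have : x7 ≤ (p:ℕ) := hap; omega) hpq
  · intro h1
    exact absurd h1 (gridC_ne_neg i j)
  · intro h1
    exact absurd h1 (gridC_ne_two i j)

lemma case0 {n : ℕ} (σ : Equiv.Perm (Fin n))
    (h : ∀ k : Fin n, ¬ ∃ j : Fin n, (j : ℕ) = (k : ℕ) + 1 ∧ σ j < σ k) :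
    InGrid gridC σ := by
  refine build σ 0 0 n n n n n 0 0 0 ?_ ?_ ?_ ?_ ?_ ?_ ?_ ?_ ?_ ?_ ?_ ?_ ?_ ?_ ?_ ?_ ?_ ?_ ?_ ?_ ?_
  all_goals try omega
  · intro p q h1 h2
    exact run_lt σ p q (Fin.lt_def.mp h2) (fun k _ _ => h k)

lemma case1 {n : ℕ} (σ : Equiv.Perm (Fin n)) (d : Fin n)
    (h : ∀ k : Fin n, (∃ j : Fin n, (j : ℕ) = (k : ℕ) + 1 ∧ σ j < σ k) → k = d) :
    InGrid gridC σ := by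
  have hdn : (d : ℕ) < n := d.isLt
  refine build σ 0 0 ((d : ℕ) + 1) ((d : ℕ) + 1) ((d : ℕ) + 1) ((d : ℕ) + 1) ((d : ℕ) + 1) 0 0 0
    ?_ ?_ ?_ ?_ ?_ ?_ ?_ ?_ ?_ ?_ ?_ ?_ ?_ ?_ ?_ ?_ ?_ ?_ ?_ ?_ ?_
  all_goals try omega
  · intro p q h1 h2
    refine run_lt σ p q (Fin.lt_def.mp h2) (fun k hk1 hk2 hdesc => ?_)
    have := h k hdesc
    rw [this] at hk2
    omega
  · intro p q h1 h2
    refine run_lt σ p q (Fin.lt_def.mp h2) (fun k hk1 hk2 hdesc => ?_)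
    have := h k hdesc
    rw [this] at hk1
    omega

lemma pat2143 {n : ℕ} (σ : Equiv.Perm (Fin n)) (a b c d : Fin n)
    (hab : (a : ℕ) < b) (hbc : (b : ℕ) < c) (hcd : (c : ℕ) < d)
    (v1 : ((σ b : Fin n) : ℕ) < ((σ a : Fin n) : ℕ))
    (v2 : ((σ a : Fin n) : ℕ) < ((σ d : Fin n) : ℕ))
    (v3 : ((σ d : Fin n) : ℕ) < ((σ c : Fin n) : ℕ)) :
    Contains σ ![2, 1, 4, 3] := by
  refine ⟨![a, b, c, d], ?_, ?_⟩
  · rw [Fin.strictMono_iff_lt_succ]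
    intro i
    fin_cases i
    · exact Fin.lt_def.mpr hab
    · exact Fin.lt_def.mpr hbc
    · exact Fin.lt_def.mpr hcd
  · intro i j
    fin_cases i <;> fin_cases j
    · show σ a < σ a ↔ (2:ℕ) < 2
      exact iff_of_false (by rw [Fin.lt_def]; omega) (by norm_num)
    · show σ a < σ b ↔ (2:ℕ) < 1
      exact iff_of_false (by rw [Fin.lt_def]; omega) (by norm_num)
    · show σ a < σ c ↔ (2:ℕ) < 4
      exact iff_of_true (Fin.lt_def.mpr (by omega)) (by norm_num)
    · show σ a < σ d ↔ (2:ℕ) < 3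
      exact iff_of_true (Fin.lt_def.mpr (by omega)) (by norm_num)
    · show σ b < σ a ↔ (1:ℕ) < 2
      exact iff_of_true (Fin.lt_def.mpr (by omega)) (by norm_num)
    · show σ b < σ b ↔ (1:ℕ) < 1
      exact iff_of_false (by rw [Fin.lt_def]; omega) (by norm_num)
    · show σ b < σ c ↔ (1:ℕ) < 4
      exact iff_of_true (Fin.lt_def.mpr (by omega)) (by norm_num)
    · show σ b < σ d ↔ (1:ℕ) < 3
      exact iff_of_true (Fin.lt_def.mpr (by omega)) (by norm_num)
    · show σ c < σ a ↔ (4:ℕ) < 2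
      exact iff_of_false (by rw [Fin.lt_def]; omega) (by norm_num)
    · show σ c < σ b ↔ (4:ℕ) < 1
      exact iff_of_false (by rw [Fin.lt_def]; omega) (by norm_num)
    · show σ c < σ c ↔ (4:ℕ) < 4
      exact iff_of_false (by rw [Fin.lt_def]; omega) (by norm_num)
    · show σ c < σ d ↔ (4:ℕ) < 3
      exact iff_of_false (by rw [Fin.lt_def]; omega) (by norm_num)
    · show σ d < σ a ↔ (3:ℕ) < 2
      exact iff_of_false (by rw [Fin.lt_def]; omega) (by norm_num)
    · show σ d < σ b ↔ (3:ℕ) < 1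
      exact iff_of_false (by rw [Fin.lt_def]; omega) (by norm_num)
    · show σ d < σ c ↔ (3:ℕ) < 4
      exact iff_of_true (Fin.lt_def.mpr (by omega)) (by norm_num)
    · show σ d < σ d ↔ (3:ℕ) < 3
      exact iff_of_false (by rw [Fin.lt_def]; omega) (by norm_num)

noncomputable def thr {n : ℕ} (P : Fin n → Prop) (dflt : ℕ) : ℕ :=
  sInf (insert dflt {m : ℕ | ∃ a : Fin n, P a ∧ (a : ℕ) = m})

lemma thr_le_dflt {n : ℕ} (P : Fin n → Prop) (dflt : ℕ) : thr P dflt ≤ dflt :=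
  Nat.sInf_le (Set.mem_insert _ _)

lemma thr_le {n : ℕ} {P : Fin n → Prop} {dflt : ℕ} {a : Fin n} (h : P a) :
    thr P dflt ≤ (a : ℕ) :=
  Nat.sInf_le (Set.mem_insert_iff.mpr (Or.inr ⟨a, h, rfl⟩))

lemma thr_cases {n : ℕ} (P : Fin n → Prop) (dflt : ℕ) :
    thr P dflt = dflt ∨ ∃ a : Fin n, P a ∧ (a : ℕ) = thr P dflt := by
  have hne : (insert dflt {m : ℕ | ∃ a : Fin n, P a ∧ (a : ℕ) = m}).Nonempty :=
    ⟨dflt, Set.mem_insert _ _⟩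
  have hmem := Nat.sInf_mem hne
  rcases Set.mem_insert_iff.mp hmem with h | h
  · exact Or.inl h
  · exact Or.inr h

lemma case2 {n : ℕ} (σ : Equiv.Perm (Fin n)) (h21 : Avoids σ ![2, 1, 4, 3])
    (d1 d2 : Fin n) (h12 : (d1 : ℕ) < (d2 : ℕ))
    (hD : ∀ k : Fin n, (∃ j : Fin n, (j : ℕ) = (k : ℕ) + 1 ∧ σ j < σ k) →
      k = d1 ∨ k = d2) : InGrid gridC σ := by
  have hd2n : (d2 : ℕ) < n := d2.isLt
  have hd1n : (d1 : ℕ) + 1 < n := by omega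
  set b1 : Fin n := ⟨(d1 : ℕ) + 1, hd1n⟩ with hb1def
  have hb1v : (b1 : ℕ) = (d1 : ℕ) + 1 := rfl
  -- runs
  have runA : ∀ p q : Fin n, (p : ℕ) < (q : ℕ) → (q : ℕ) ≤ (d1 : ℕ) → σ p < σ q := by
    intro p q h1 h2
    refine run_lt σ p q h1 (fun k hk1 hk2 hdesc => ?_)
    rcases hD k hdesc with h | h <;> rw [h] at hk2 <;> omega
  have runB : ∀ p q : Fin n, (d1 : ℕ) < (p : ℕ) → (p : ℕ) < (q : ℕ) → (q : ℕ) ≤ (d2 : ℕ) →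
      σ p < σ q := by
    intro p q h0 h1 h2
    refine run_lt σ p q h1 (fun k hk1 hk2 hdesc => ?_)
    rcases hD k hdesc with h | h <;> rw [h] at hk1 hk2 <;> omega
  have runC : ∀ p q : Fin n, (d2 : ℕ) < (p : ℕ) → (p : ℕ) < (q : ℕ) → σ p < σ q := by
    intro p q h0 h1
    refine run_lt σ p q h1 (fun k hk1 hk2 hdesc => ?_)
    rcases hD k hdesc with h | h <;> rw [h] at hk1 <;> omega
  have runAle : ∀ p q : Fin n, (p : ℕ) ≤ (q : ℕ) → (q : ℕ) ≤ (d1 : ℕ) →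
      ((σ p : Fin n) : ℕ) ≤ ((σ q : Fin n) : ℕ) := by
    intro p q h1 h2
    rcases eq_or_lt_of_le h1 with h | h
    · rw [Fin.val_injective h]
    · exact le_of_lt (Fin.lt_def.mp (runA p q h h2))
  have runBle : ∀ p q : Fin n, (d1 : ℕ) < (p : ℕ) → (p : ℕ) ≤ (q : ℕ) → (q : ℕ) ≤ (d2 : ℕ) →
      ((σ p : Fin n) : ℕ) ≤ ((σ q : Fin n) : ℕ) := by
    intro p q h0 h1 h2
    rcases eq_or_lt_of_le h1 with h | h
    · rw [Fin.val_injective h]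
    · exact le_of_lt (Fin.lt_def.mp (runB p q h0 h h2))
  have runCle : ∀ p q : Fin n, (d2 : ℕ) < (p : ℕ) → (p : ℕ) ≤ (q : ℕ) →
      ((σ p : Fin n) : ℕ) ≤ ((σ q : Fin n) : ℕ) := by
    intro p q h0 h1
    rcases eq_or_lt_of_le h1 with h | h
    · rw [Fin.val_injective h]
    · exact le_of_lt (Fin.lt_def.mp (runC p q h0 h))
  have vne : ∀ p q : Fin n, (p : ℕ) ≠ (q : ℕ) → ((σ p : Fin n) : ℕ) ≠ ((σ q : Fin n) : ℕ) := by
    intro p q hpq hv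
    exact hpq (congrArg Fin.val (σ.injective (Fin.val_injective hv)))
  set m1 : ℕ := ((σ b1 : Fin n) : ℕ) with hm1def
  set m2 : ℕ := ((σ d2 : Fin n) : ℕ) with hm2def
  have hm12 : m1 ≤ m2 := runBle b1 d2 (by omega) (by omega) le_rfl
  have hBlow : ∀ p : Fin n, (d1 : ℕ) < (p : ℕ) → (p : ℕ) ≤ (d2 : ℕ) →
      m1 ≤ ((σ p : Fin n) : ℕ) := fun p h1 h2 => runBle b1 p (by omega) (by omega) h2
  have hBhigh : ∀ p : Fin n, (d1 : ℕ) < (p : ℕ) → (p : ℕ) ≤ (d2 : ℕ) →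
      ((σ p : Fin n) : ℕ) ≤ m2 := fun p h1 h2 => runBle p d2 h1 h2 le_rfl
  set y1 : ℕ := m1 with hy1def
  set y3 : ℕ := m2 + 1 with hy3def
  have hy3n : y3 ≤ n := by have := (σ d2).isLt; omega
  -- the key 2143 lemma
  have key : ∀ a c : Fin n, (a : ℕ) ≤ (d1 : ℕ) → (d2 : ℕ) < (c : ℕ) →
      m1 ≤ ((σ a : Fin n) : ℕ) → ((σ c : Fin n) : ℕ) ≤ m2 →
      ((σ a : Fin n) : ℕ) ≤ ((σ c : Fin n) : ℕ) → False := by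
    intro a c ha hc h1 h2 h3
    have v1 : ((σ b1 : Fin n) : ℕ) < ((σ a : Fin n) : ℕ) :=
      lt_of_le_of_ne h1 (vne b1 a (by omega))
    have v2 : ((σ a : Fin n) : ℕ) < ((σ c : Fin n) : ℕ) :=
      lt_of_le_of_ne h3 (vne a c (by omega))
    have v3 : ((σ c : Fin n) : ℕ) < ((σ d2 : Fin n) : ℕ) :=
      lt_of_le_of_ne h2 (vne c d2 (by omega))
    have hbd : (b1 : ℕ) ≠ (d2 : ℕ) := by
      intro h
      have heq : b1 = d2 := Fin.val_injective h
      rw [heq] at v1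
      omega
    exact h21 (pat2143 σ a b1 d2 c (by omega) (by omega) (by omega) v1 (by omega) v3)
  -- value cut y2
  set y2 : ℕ := sInf (insert y3
    {m : ℕ | ∃ a : Fin n, (a : ℕ) ≤ (d1 : ℕ) ∧ y1 ≤ m ∧ m < y3 ∧ ((σ a : Fin n) : ℕ) = m})
    with hy2def
  have hy2cases : y2 = y3 ∨ ∃ a : Fin n, (a : ℕ) ≤ (d1 : ℕ) ∧ y1 ≤ y2 ∧ y2 < y3 ∧
      ((σ a : Fin n) : ℕ) = y2 := by
    have hne : (insert y3 {m : ℕ | ∃ a : Fin n, (a : ℕ) ≤ (d1 : ℕ) ∧ y1 ≤ m ∧ m < y3 ∧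
        ((σ a : Fin n) : ℕ) = m}).Nonempty := ⟨y3, Set.mem_insert _ _⟩
    have hmem := Nat.sInf_mem hne
    rw [← hy2def] at hmem
    rcases Set.mem_insert_iff.mp hmem with h | h
    · exact Or.inl h
    · obtain ⟨a, ha1, ha2, ha3, ha4⟩ := h
      exact Or.inr ⟨a, ha1, by omega, by omega, ha4⟩
  have hy2le : ∀ a : Fin n, (a : ℕ) ≤ (d1 : ℕ) → y1 ≤ ((σ a : Fin n) : ℕ) →
      ((σ a : Fin n) : ℕ) < y3 → y2 ≤ ((σ a : Fin n) : ℕ) := by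
    intro a h1 h2 h3
    exact Nat.sInf_le (Set.mem_insert_iff.mpr (Or.inr ⟨a, h1, h2, h3, rfl⟩))
  have hy23 : y2 ≤ y3 := Nat.sInf_le (Set.mem_insert _ _)
  have hy12 : y1 ≤ y2 := by rcases hy2cases with h | ⟨a, _, h, _, _⟩ <;> omega
  -- A avoids [y1, y2)
  have hAgap : ∀ a : Fin n, (a : ℕ) ≤ (d1 : ℕ) → y1 ≤ ((σ a : Fin n) : ℕ) →
      y2 ≤ ((σ a : Fin n) : ℕ) := by
    intro a h1 h2
    by_contra hcon
    push_neg at hcon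
    have := hy2le a h1 h2 (by omega)
    omega
  -- C avoids [y2, y3)
  have hCgap : ∀ c : Fin n, (d2 : ℕ) < (c : ℕ) → y2 ≤ ((σ c : Fin n) : ℕ) →
      y3 ≤ ((σ c : Fin n) : ℕ) := by
    intro c h1 h2
    by_contra hcon
    push_neg at hcon
    rcases hy2cases with h | ⟨a, ha1, ha2, ha3, ha4⟩
    · omega
    · exact key a c ha1 h1 (by omega) (by omega) (by omega)
  -- position cuts
  set x1 : ℕ := thr (fun a => (a : ℕ) ≤ (d1 : ℕ) ∧ y1 ≤ ((σ a : Fin n) : ℕ)) ((d1 : ℕ) + 1)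
    with hx1def
  set x2 : ℕ := thr (fun a => (a : ℕ) ≤ (d1 : ℕ) ∧ y3 ≤ ((σ a : Fin n) : ℕ)) ((d1 : ℕ) + 1)
    with hx2def
  set x4 : ℕ := thr (fun a => (d1 : ℕ) < (a : ℕ) ∧ (a : ℕ) ≤ (d2 : ℕ) ∧
    y2 ≤ ((σ a : Fin n) : ℕ)) ((d2 : ℕ) + 1) with hx4def
  set x6 : ℕ := thr (fun a => (d2 : ℕ) < (a : ℕ) ∧ y1 ≤ ((σ a : Fin n) : ℕ)) n with hx6def
  set x7 : ℕ := thr (fun a => (d2 : ℕ) < (a : ℕ) ∧ y2 ≤ ((σ a : Fin n) : ℕ)) n with hx7def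
  have hx1d : x1 ≤ (d1 : ℕ) + 1 := thr_le_dflt _ _
  have hx2d : x2 ≤ (d1 : ℕ) + 1 := thr_le_dflt _ _
  have hx4d : x4 ≤ (d2 : ℕ) + 1 := thr_le_dflt _ _
  have hx6d : x6 ≤ n := thr_le_dflt _ _
  have hx7d : x7 ≤ n := thr_le_dflt _ _
  have hx12 : x1 ≤ x2 := by
    rcases thr_cases (fun a : Fin n => (a : ℕ) ≤ (d1 : ℕ) ∧ y3 ≤ ((σ a : Fin n) : ℕ))
      ((d1 : ℕ) + 1) with h | ⟨a, ⟨ha1, ha2⟩, ha3⟩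
    · rw [← hx2def] at h; omega
    · rw [← hx2def] at ha3
      have := thr_le (P := fun a : Fin n => (a : ℕ) ≤ (d1 : ℕ) ∧ y1 ≤ ((σ a : Fin n) : ℕ))
        (dflt := (d1 : ℕ) + 1) (a := a) ⟨ha1, by omega⟩
      rw [← hx1def] at this
      omega
  have hx34 : (d1 : ℕ) + 1 ≤ x4 := by
    rcases thr_cases (fun a : Fin n => (d1 : ℕ) < (a : ℕ) ∧ (a : ℕ) ≤ (d2 : ℕ) ∧
      y2 ≤ ((σ a : Fin n) : ℕ)) ((d2 : ℕ) + 1) with h | ⟨a, ⟨ha1, _, _⟩, ha3⟩ <;>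
      rw [← hx4def] at * <;> omega
  have hx56 : (d2 : ℕ) + 1 ≤ x6 := by
    rcases thr_cases (fun a : Fin n => (d2 : ℕ) < (a : ℕ) ∧ y1 ≤ ((σ a : Fin n) : ℕ)) n
      with h | ⟨a, ⟨ha1, _⟩, ha3⟩ <;> rw [← hx6def] at * <;> omega
  have hx67 : x6 ≤ x7 := by
    rcases thr_cases (fun a : Fin n => (d2 : ℕ) < (a : ℕ) ∧ y2 ≤ ((σ a : Fin n) : ℕ)) n
      with h | ⟨a, ⟨ha1, ha2⟩, ha3⟩
    · rw [← hx7def] at h; omega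
    · rw [← hx7def] at ha3
      have := thr_le (P := fun a : Fin n => (d2 : ℕ) < (a : ℕ) ∧ y1 ≤ ((σ a : Fin n) : ℕ))
        (dflt := n) (a := a) ⟨ha1, by omega⟩
      rw [← hx6def] at this
      omega
  -- band facts
  have hband1 : ∀ p : Fin n, x1 ≤ (p : ℕ) → (p : ℕ) ≤ (d1 : ℕ) → y1 ≤ ((σ p : Fin n) : ℕ) := by
    intro p h1 h2
    rcases thr_cases (fun a : Fin n => (a : ℕ) ≤ (d1 : ℕ) ∧ y1 ≤ ((σ a : Fin n) : ℕ))
      ((d1 : ℕ) + 1) with h | ⟨a, ⟨ha1, ha2⟩, ha3⟩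
    · rw [← hx1def] at h; omega
    · rw [← hx1def] at ha3
      have := runAle a p (by omega) h2
      omega
  have hband2 : ∀ p : Fin n, x2 ≤ (p : ℕ) → (p : ℕ) ≤ (d1 : ℕ) → y3 ≤ ((σ p : Fin n) : ℕ) := by
    intro p h1 h2
    rcases thr_cases (fun a : Fin n => (a : ℕ) ≤ (d1 : ℕ) ∧ y3 ≤ ((σ a : Fin n) : ℕ))
      ((d1 : ℕ) + 1) with h | ⟨a, ⟨ha1, ha2⟩, ha3⟩
    · rw [← hx2def] at h; omega
    · rw [← hx2def] at ha3
      have := runAle a p (by omega) h2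
      omega
  have hband4 : ∀ p : Fin n, x4 ≤ (p : ℕ) → (p : ℕ) ≤ (d2 : ℕ) → y2 ≤ ((σ p : Fin n) : ℕ) := by
    intro p h1 h2
    rcases thr_cases (fun a : Fin n => (d1 : ℕ) < (a : ℕ) ∧ (a : ℕ) ≤ (d2 : ℕ) ∧
      y2 ≤ ((σ a : Fin n) : ℕ)) ((d2 : ℕ) + 1) with h | ⟨a, ⟨ha1, ha2, ha4⟩, ha3⟩
    · rw [← hx4def] at h; omega
    · rw [← hx4def] at ha3
      have := runBle a p ha1 (by omega) h2
      omega
  have hband6 : ∀ p : Fin n, x6 ≤ (p : ℕ) → (p : ℕ) < n → y1 ≤ ((σ p : Fin n) : ℕ) := by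
    intro p h1 h2
    rcases thr_cases (fun a : Fin n => (d2 : ℕ) < (a : ℕ) ∧ y1 ≤ ((σ a : Fin n) : ℕ)) n
      with h | ⟨a, ⟨ha1, ha2⟩, ha3⟩
    · rw [← hx6def] at h; omega
    · rw [← hx6def] at ha3
      have := runCle a p ha1 (by omega)
      omega
  have hband7 : ∀ p : Fin n, x7 ≤ (p : ℕ) → (p : ℕ) < n → y2 ≤ ((σ p : Fin n) : ℕ) := by
    intro p h1 h2
    rcases thr_cases (fun a : Fin n => (d2 : ℕ) < (a : ℕ) ∧ y2 ≤ ((σ a : Fin n) : ℕ)) n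
      with h | ⟨a, ⟨ha1, ha2⟩, ha3⟩
    · rw [← hx7def] at h; omega
    · rw [← hx7def] at ha3
      have := runCle a p ha1 (by omega)
      omega
  refine build σ x1 x2 ((d1 : ℕ) + 1) x4 ((d2 : ℕ) + 1) x6 x7 y1 y2 y3
    hx12 hx2d hx34 hx4d hx56 hx67 hx7d hy12 hy23 hy3n ?_ ?_ ?_ ?_ ?_ ?_ ?_ ?_ ?_ ?_ ?_
  · -- hb0
    intro p hp
    by_contra hcon
    push_neg at hcon
    have := thr_le (P := fun a : Fin n => (a : ℕ) ≤ (d1 : ℕ) ∧ y1 ≤ ((σ a : Fin n) : ℕ))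
      (dflt := (d1 : ℕ) + 1) (a := p) ⟨by omega, hcon⟩
    rw [← hx1def] at this
    omega
  · -- hb1
    intro p h1 h2
    have hpd : (p : ℕ) ≤ (d1 : ℕ) := by omega
    have hv1 : y1 ≤ ((σ p : Fin n) : ℕ) := hband1 p h1 hpd
    have hv3 : ((σ p : Fin n) : ℕ) < y3 := by
      by_contra hcon
      push_neg at hcon
      have := thr_le (P := fun a : Fin n => (a : ℕ) ≤ (d1 : ℕ) ∧ y3 ≤ ((σ a : Fin n) : ℕ))
        (dflt := (d1 : ℕ) + 1) (a := p) ⟨hpd, hcon⟩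
      rw [← hx2def] at this
      omega
    exact ⟨hAgap p hpd hv1, hv3⟩
  · -- hb2
    intro p h1 h2
    exact hband2 p h1 (by omega)
  · -- hb3
    intro p h1 h2
    have hpd : (p : ℕ) ≤ (d2 : ℕ) := by omega
    refine ⟨hBlow p (by omega) hpd, ?_⟩
    by_contra hcon
    push_neg at hcon
    have := thr_le (P := fun a : Fin n => (d1 : ℕ) < (a : ℕ) ∧ (a : ℕ) ≤ (d2 : ℕ) ∧
      y2 ≤ ((σ a : Fin n) : ℕ)) (dflt := (d2 : ℕ) + 1) (a := p) ⟨by omega, hpd, hcon⟩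
    rw [← hx4def] at this
    omega
  · -- hb4
    intro p h1 h2
    have hpd : (p : ℕ) ≤ (d2 : ℕ) := by omega
    refine ⟨hband4 p h1 hpd, ?_⟩
    have := hBhigh p (by omega) hpd
    omega
  · -- hb5
    intro p h1 h2
    by_contra hcon
    push_neg at hcon
    have := thr_le (P := fun a : Fin n => (d2 : ℕ) < (a : ℕ) ∧ y1 ≤ ((σ a : Fin n) : ℕ))
      (dflt := n) (a := p) ⟨by omega, hcon⟩
    rw [← hx6def] at this
    omega
  · -- hb6
    intro p h1 h2
    refine ⟨hband6 p h1 p.isLt, ?_⟩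
    by_contra hcon
    push_neg at hcon
    have := thr_le (P := fun a : Fin n => (d2 : ℕ) < (a : ℕ) ∧ y2 ≤ ((σ a : Fin n) : ℕ))
      (dflt := n) (a := p) ⟨by omega, hcon⟩
    rw [← hx7def] at this
    omega
  · -- hb7
    intro p h1
    exact hCgap p (by omega) (hband7 p h1 p.isLt)
  · -- hiA
    intro p q h1 h2
    exact runA p q (Fin.lt_def.mp h2) (by omega)
  · -- hiB
    intro p q h1 h2 h3
    exact runB p q (by omega) (Fin.lt_def.mp h3) (by omega)
  · -- hiC
    intro p q h1 h2
    exact runC p q (by omega) (Fin.lt_def.mp h2)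

lemma ofProps {n : ℕ} (σ : Equiv.Perm (Fin n)) (h21 : Avoids σ ![2, 1, 4, 3])
    (hd : descentCount σ ≤ 2) : InGrid gridC σ := by
  classical
  by_cases hex : ∃ k : Fin n, ∃ j : Fin n, (j : ℕ) = (k : ℕ) + 1 ∧ σ j < σ k
  · obtain ⟨k1, hk1⟩ := hex
    by_cases hex2 : ∃ k : Fin n, (∃ j : Fin n, (j : ℕ) = (k : ℕ) + 1 ∧ σ j < σ k) ∧ k ≠ k1
    · obtain ⟨k2, hk2, hne⟩ := hex2
      have h3 : ∀ k : Fin n, (∃ j : Fin n, (j : ℕ) = (k : ℕ) + 1 ∧ σ j < σ k) →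
          k = k1 ∨ k = k2 := by
        intro k hk
        by_contra hcon
        push_neg at hcon
        obtain ⟨hne1, hne2⟩ := hcon
        have hinj : Function.Injective (fun i : Fin 3 =>
            if i = 0 then (⟨k1, hk1⟩ : {i : Fin n // ∃ j : Fin n, (j : ℕ) = (i : ℕ) + 1 ∧ σ j < σ i})
            else if i = 1 then ⟨k2, hk2⟩ else ⟨k, hk⟩) := by
          intro a b hab
          fin_cases a <;> fin_cases b <;> simp_all [Subtype.mk.injEq] <;>
            first
              | rfl
              | (exact absurd hab.symm hne)
              | (exact absurd hab hne)
              | (exact absurd hab.symm hne1)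
              | (exact absurd hab hne1)
              | (exact absurd hab.symm hne2)
              | (exact absurd hab hne2)
        have hle := Nat.card_le_card_of_injective _ hinj
        have h2 : (3 : ℕ) ≤ descentCount σ := by
          simpa [descentCount, Nat.card_eq_fintype_card] using hle
        omega
      rcases lt_trichotomy (k1 : ℕ) (k2 : ℕ) with h | h | h
      · exact case2 σ h21 k1 k2 h h3
      · exact absurd (Fin.val_injective h).symm hne
      · exact case2 σ h21 k2 k1 h (fun k hk => (h3 k hk).symm)
    · push_neg at hex2
      exact case1 σ k1 (fun k hk => by
        by_contra hne
        exact hne (hex2 k hk))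
  · exact case0 σ (fun k hk => hex ⟨k, hk⟩)

lemma toProps {n : ℕ} (σ : Equiv.Perm (Fin n)) (hg : InGrid gridC σ) :
    Avoids σ ![2, 1, 4, 3] ∧ Avoids σ ![4, 3, 2, 1] ∧ descentCount σ ≤ 2 := by
  classical
  obtain ⟨x, y, hxm, hym, hx0, hx8, hy0, hy4, hcell⟩ := hg
  choose col hcol1 hcol2 using fun p : Fin n => exists_cell x hxm hx0 hx8 (p : ℕ) p.isLt
  choose row hrow1 hrow2 using fun p : Fin n =>
    exists_cell y hym hy0 hy4 ((σ p : Fin n) : ℕ) (σ p).isLt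
  have hInC : ∀ p : Fin n, InCell x y σ (col p) (row p) p :=
    fun p => ⟨hcol1 p, hcol2 p, hrow1 p, hrow2 p⟩
  have hrowR : ∀ p : Fin n, row p = Rrow (col p) := by
    intro p
    by_cases hz : gridC (col p) (row p) = 0
    · exact absurd (hInC p) ((hcell (col p) (row p)).1 hz p)
    · exact gridC_row _ _ hz
  have hinc : ∀ p q : Fin n, p < q → col p = col q → σ p < σ q := by
    intro p q hpq hcq
    refine (hcell (col p) (Rrow (col p))).2.1 (gridC_R _) p q ?_ ?_ hpq
    · have := hInC p; rw [hrowR p] at this; exact this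
    · have := hInC q; rw [hrowR q, ← hcq] at this; exact this
  have hcolmono : ∀ p q : Fin n, (p : ℕ) ≤ (q : ℕ) → col p ≤ col q :=
    fun p q h => cell_le x hxm (hcol2 q) (hcol1 p) h
  have hrowmono : ∀ p q : Fin n, ((σ p : Fin n) : ℕ) ≤ ((σ q : Fin n) : ℕ) →
      Rrow (col p) ≤ Rrow (col q) := by
    intro p q h
    rw [← hrowR p, ← hrowR q]
    exact cell_le y hym (hrow2 q) (hrow1 p) h
  have cstep : ∀ p q : Fin n, p < q → σ q < σ p → col p < col q := by
    intro p q hpq hlt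
    have h1 : col p ≤ col q := hcolmono p q (le_of_lt (Fin.lt_def.mp hpq))
    have h2 : col p ≠ col q := fun h => absurd (hinc p q hpq h) (asymm hlt)
    exact lt_of_le_of_ne h1 h2
  refine ⟨?_, ?_, ?_⟩
  · -- Avoids 2143
    rintro ⟨f, hf, hp⟩
    have q10 : σ (f 1) < σ (f 0) := (hp 1 0).mpr (by norm_num)
    have q03 : σ (f 0) < σ (f 3) := (hp 0 3).mpr (by decide)
    have q32 : σ (f 3) < σ (f 2) := (hp 3 2).mpr (by decide)
    have c01 : col (f 0) < col (f 1) := cstep _ _ (hf (by decide)) q10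
    have c12 : col (f 1) ≤ col (f 2) :=
      hcolmono _ _ (le_of_lt (Fin.lt_def.mp (hf (by decide : (1 : Fin 4) < 2))))
    have c23 : col (f 2) < col (f 3) := cstep _ _ (hf (by decide)) q32
    have r10 : Rrow (col (f 1)) ≤ Rrow (col (f 0)) :=
      hrowmono _ _ (le_of_lt (Fin.lt_def.mp q10))
    have r03 : Rrow (col (f 0)) ≤ Rrow (col (f 3)) :=
      hrowmono _ _ (le_of_lt (Fin.lt_def.mp q03))
    have r32 : Rrow (col (f 3)) ≤ Rrow (col (f 2)) :=
      hrowmono _ _ (le_of_lt (Fin.lt_def.mp q32))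
    exact no2143 _ _ _ _ c01 c12 c23 r10 r03 r32
  · -- Avoids 4321
    rintro ⟨f, hf, hp⟩
    have q10 : σ (f 1) < σ (f 0) := (hp 1 0).mpr (by norm_num)
    have q21 : σ (f 2) < σ (f 1) := (hp 2 1).mpr (by decide)
    have q32 : σ (f 3) < σ (f 2) := (hp 3 2).mpr (by decide)
    have c01 : col (f 0) < col (f 1) := cstep _ _ (hf (by decide)) q10
    have c12 : col (f 1) < col (f 2) := cstep _ _ (hf (by decide)) q21
    have c23 : col (f 2) < col (f 3) := cstep _ _ (hf (by decide)) q32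
    have r10 : Rrow (col (f 1)) ≤ Rrow (col (f 0)) :=
      hrowmono _ _ (le_of_lt (Fin.lt_def.mp q10))
    have r21 : Rrow (col (f 2)) ≤ Rrow (col (f 1)) :=
      hrowmono _ _ (le_of_lt (Fin.lt_def.mp q21))
    have r32 : Rrow (col (f 3)) ≤ Rrow (col (f 2)) :=
      hrowmono _ _ (le_of_lt (Fin.lt_def.mp q32))
    exact no4desc _ _ _ _ c01 c12 c23 r10 r21 r32
  · -- descentCount
    have hsucc : ∀ a : {i : Fin n // ∃ j : Fin n, (j : ℕ) = (i : ℕ) + 1 ∧ σ j < σ i},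
        (a.1 : ℕ) + 1 < n := by
      rintro ⟨i, j, hj1, hj2⟩
      have := j.isLt
      simp only at hj1 ⊢
      omega
    set g : {i : Fin n // ∃ j : Fin n, (j : ℕ) = (i : ℕ) + 1 ∧ σ j < σ i} → Fin n :=
      fun a => ⟨(a.1 : ℕ) + 1, hsucc a⟩ with hgdef
    have hgv : ∀ a, ((g a : Fin n) : ℕ) = (a.1 : ℕ) + 1 := fun a => rfl
    have hga : ∀ a, σ (g a) < σ a.1 := by
      intro a
      obtain ⟨j, hj1, hj2⟩ := a.2
      have hj : j = g a := Fin.val_injective (by rw [hj1, hgv])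
      rw [← hj]
      exact hj2
    set F : {i : Fin n // ∃ j : Fin n, (j : ℕ) = (i : ℕ) + 1 ∧ σ j < σ i} → Fin 2 :=
      fun a => if (col (g a) : ℕ) ≤ 4 then 0 else 1 with hFdef
    have hkey : ∀ a b, (a.1 : ℕ) < (b.1 : ℕ) → F a = F b → False := by
      intro a b hab hFeq
      have h1 : col a.1 < col (g a) :=
        cstep a.1 (g a) (Fin.lt_def.mpr (by rw [hgv]; omega)) (hga a)
      have h2 : col b.1 < col (g b) :=
        cstep b.1 (g b) (Fin.lt_def.mpr (by rw [hgv]; omega)) (hga b)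
      have h3 : col (g a) ≤ col b.1 := hcolmono (g a) b.1 (by rw [hgv]; omega)
      have r1 : Rrow (col (g a)) ≤ Rrow (col a.1) :=
        hrowmono _ _ (le_of_lt (Fin.lt_def.mp (hga a)))
      have r2 : Rrow (col (g b)) ≤ Rrow (col b.1) :=
        hrowmono _ _ (le_of_lt (Fin.lt_def.mp (hga b)))
      by_cases h4 : (col (g a) : ℕ) ≤ 4 <;> by_cases h5 : (col (g b) : ℕ) ≤ 4
      · exact noJump3 _ _ _ _ h1 h3 h2 r1 r2 h5
      · simp [hFdef, h4, h5] at hFeq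
      · simp [hFdef, h4, h5] at hFeq
      · exact noJumpHigh _ _ _ h3 h2 r2 (by omega)
    have hFinj : Function.Injective F := by
      intro a b hab
      by_contra hne
      have hv : (a.1 : ℕ) ≠ (b.1 : ℕ) := fun h => hne (Subtype.ext (Fin.val_injective h))
      rcases lt_or_gt_of_ne hv with h | h
      · exact hkey a b h hab
      · exact hkey b a h hab.symm
    have hle := Nat.card_le_card_of_injective F hFinj
    simpa [descentCount, Nat.card_eq_fintype_card] using hle


theorem gridC_eq_av_with_at_most_two_descents :
    ∀ (n : ℕ) (σ : Equiv.Perm (Fin n)),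
      InGrid gridC σ ↔
        (Avoids σ ![2, 1, 4, 3] ∧ Avoids σ ![4, 3, 2, 1] ∧ descentCount σ ≤ 2) := by
  intro n σ
  constructor
  · exact toProps σ
  · rintro ⟨h21, _, hd⟩
    exact ofProps σ h21 hd
end

section
/- Let B be the 3×3 gridding matrix with entry 1 in cells (1,1), (1,2), (2,1), (3,3) (cells written as (column, row), columns left to right, rows bottom to top) and 0 elsewhere. Then the monotone grid class Grid(B) has basis {2143, 4321, 35142, 35214, 35241, 43152, 53142}; that is, a permutation lies in Grid(B) if and only if it avoids all of the patterns 2143, 4321, 35142, 35214, 35241, 43152 and 53142. -/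
set_option maxRecDepth 100000
set_option maxHeartbeats 4000000
set_option synthInstance.maxHeartbeats 2000000
set_option synthInstance.maxSize 2000


def gridB : Fin 3 → Fin 3 → ℤ :=
  ![![1, 1, 0], ![1, 0, 0], ![0, 0, 1]]


section Helpers
variable {n : ℕ} (σ : Equiv.Perm (Fin n)) (F : ℕ → ℕ)

lemma c2143 (hF : ∀ i (h : i < n), F i = (σ ⟨i, h⟩ : ℕ))
    (w1 w2 w3 w4 : ℕ) (h1 : w1 < w2) (h2 : w2 < w3) (h3 : w3 < w4) (hn : w4 < n)
    (v1 : F w2 < F w1) (v2 : F w1 < F w4) (v3 : F w4 < F w3) :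
    Contains σ ![2, 1, 4, 3] := by
  have E : ∀ x : Fin n, (σ x : ℕ) = F x.val := by intro x; rw [hF x.val x.isLt]
  refine ⟨![⟨w1, by omega⟩, ⟨w2, by omega⟩, ⟨w3, by omega⟩, ⟨w4, hn⟩], ?_, ?_⟩
  · rintro ⟨av, ha⟩ ⟨bv, hb⟩ hab
    rw [Fin.mk_lt_mk] at hab
    interval_cases av <;> interval_cases bv <;> simp [Fin.lt_def] <;> omega
  · rintro ⟨av, ha⟩ ⟨bv, hb⟩
    interval_cases av <;> interval_cases bv <;> simp [Fin.lt_def, E] <;> omega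

lemma c4321 (hF : ∀ i (h : i < n), F i = (σ ⟨i, h⟩ : ℕ))
    (w1 w2 w3 w4 : ℕ) (h1 : w1 < w2) (h2 : w2 < w3) (h3 : w3 < w4) (hn : w4 < n)
    (v1 : F w4 < F w3) (v2 : F w3 < F w2) (v3 : F w2 < F w1) :
    Contains σ ![4, 3, 2, 1] := by
  have E : ∀ x : Fin n, (σ x : ℕ) = F x.val := by intro x; rw [hF x.val x.isLt]
  refine ⟨![⟨w1, by omega⟩, ⟨w2, by omega⟩, ⟨w3, by omega⟩, ⟨w4, hn⟩], ?_, ?_⟩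
  · rintro ⟨av, ha⟩ ⟨bv, hb⟩ hab
    rw [Fin.mk_lt_mk] at hab
    interval_cases av <;> interval_cases bv <;> simp [Fin.lt_def] <;> omega
  · rintro ⟨av, ha⟩ ⟨bv, hb⟩
    interval_cases av <;> interval_cases bv <;> simp [Fin.lt_def, E] <;> omega

lemma c35142 (hF : ∀ i (h : i < n), F i = (σ ⟨i, h⟩ : ℕ))
    (w1 w2 w3 w4 w5 : ℕ) (h1 : w1 < w2) (h2 : w2 < w3) (h3 : w3 < w4) (h4 : w4 < w5) (hn : w5 < n)
    (v1 : F w3 < F w5) (v2 : F w5 < F w1) (v3 : F w1 < F w4) (v4 : F w4 < F w2) :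
    Contains σ ![3, 5, 1, 4, 2] := by
  have E : ∀ x : Fin n, (σ x : ℕ) = F x.val := by intro x; rw [hF x.val x.isLt]
  refine ⟨![⟨w1, by omega⟩, ⟨w2, by omega⟩, ⟨w3, by omega⟩, ⟨w4, by omega⟩, ⟨w5, hn⟩], ?_, ?_⟩
  · rintro ⟨av, ha⟩ ⟨bv, hb⟩ hab
    rw [Fin.mk_lt_mk] at hab
    interval_cases av <;> interval_cases bv <;> simp [Fin.lt_def] <;> omega
  · rintro ⟨av, ha⟩ ⟨bv, hb⟩
    interval_cases av <;> interval_cases bv <;> simp [Fin.lt_def, E] <;> omega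

lemma c35214 (hF : ∀ i (h : i < n), F i = (σ ⟨i, h⟩ : ℕ))
    (w1 w2 w3 w4 w5 : ℕ) (h1 : w1 < w2) (h2 : w2 < w3) (h3 : w3 < w4) (h4 : w4 < w5) (hn : w5 < n)
    (v1 : F w4 < F w3) (v2 : F w3 < F w1) (v3 : F w1 < F w5) (v4 : F w5 < F w2) :
    Contains σ ![3, 5, 2, 1, 4] := by
  have E : ∀ x : Fin n, (σ x : ℕ) = F x.val := by intro x; rw [hF x.val x.isLt]
  refine ⟨![⟨w1, by omega⟩, ⟨w2, by omega⟩, ⟨w3, by omega⟩, ⟨w4, by omega⟩, ⟨w5, hn⟩], ?_, ?_⟩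
  · rintro ⟨av, ha⟩ ⟨bv, hb⟩ hab
    rw [Fin.mk_lt_mk] at hab
    interval_cases av <;> interval_cases bv <;> simp [Fin.lt_def] <;> omega
  · rintro ⟨av, ha⟩ ⟨bv, hb⟩
    interval_cases av <;> interval_cases bv <;> simp [Fin.lt_def, E] <;> omega

lemma c35241 (hF : ∀ i (h : i < n), F i = (σ ⟨i, h⟩ : ℕ))
    (w1 w2 w3 w4 w5 : ℕ) (h1 : w1 < w2) (h2 : w2 < w3) (h3 : w3 < w4) (h4 : w4 < w5) (hn : w5 < n)
    (v1 : F w5 < F w3) (v2 : F w3 < F w1) (v3 : F w1 < F w4) (v4 : F w4 < F w2) :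
    Contains σ ![3, 5, 2, 4, 1] := by
  have E : ∀ x : Fin n, (σ x : ℕ) = F x.val := by intro x; rw [hF x.val x.isLt]
  refine ⟨![⟨w1, by omega⟩, ⟨w2, by omega⟩, ⟨w3, by omega⟩, ⟨w4, by omega⟩, ⟨w5, hn⟩], ?_, ?_⟩
  · rintro ⟨av, ha⟩ ⟨bv, hb⟩ hab
    rw [Fin.mk_lt_mk] at hab
    interval_cases av <;> interval_cases bv <;> simp [Fin.lt_def] <;> omega
  · rintro ⟨av, ha⟩ ⟨bv, hb⟩
    interval_cases av <;> interval_cases bv <;> simp [Fin.lt_def, E] <;> omega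

lemma c43152 (hF : ∀ i (h : i < n), F i = (σ ⟨i, h⟩ : ℕ))
    (w1 w2 w3 w4 w5 : ℕ) (h1 : w1 < w2) (h2 : w2 < w3) (h3 : w3 < w4) (h4 : w4 < w5) (hn : w5 < n)
    (v1 : F w3 < F w5) (v2 : F w5 < F w2) (v3 : F w2 < F w1) (v4 : F w1 < F w4) :
    Contains σ ![4, 3, 1, 5, 2] := by
  have E : ∀ x : Fin n, (σ x : ℕ) = F x.val := by intro x; rw [hF x.val x.isLt]
  refine ⟨![⟨w1, by omega⟩, ⟨w2, by omega⟩, ⟨w3, by omega⟩, ⟨w4, by omega⟩, ⟨w5, hn⟩], ?_, ?_⟩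
  · rintro ⟨av, ha⟩ ⟨bv, hb⟩ hab
    rw [Fin.mk_lt_mk] at hab
    interval_cases av <;> interval_cases bv <;> simp [Fin.lt_def] <;> omega
  · rintro ⟨av, ha⟩ ⟨bv, hb⟩
    interval_cases av <;> interval_cases bv <;> simp [Fin.lt_def, E] <;> omega

lemma c53142 (hF : ∀ i (h : i < n), F i = (σ ⟨i, h⟩ : ℕ))
    (w1 w2 w3 w4 w5 : ℕ) (h1 : w1 < w2) (h2 : w2 < w3) (h3 : w3 < w4) (h4 : w4 < w5) (hn : w5 < n)
    (v1 : F w3 < F w5) (v2 : F w5 < F w2) (v3 : F w2 < F w4) (v4 : F w4 < F w1) :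
    Contains σ ![5, 3, 1, 4, 2] := by
  have E : ∀ x : Fin n, (σ x : ℕ) = F x.val := by intro x; rw [hF x.val x.isLt]
  refine ⟨![⟨w1, by omega⟩, ⟨w2, by omega⟩, ⟨w3, by omega⟩, ⟨w4, by omega⟩, ⟨w5, hn⟩], ?_, ?_⟩
  · rintro ⟨av, ha⟩ ⟨bv, hb⟩ hab
    rw [Fin.mk_lt_mk] at hab
    interval_cases av <;> interval_cases bv <;> simp [Fin.lt_def] <;> omega
  · rintro ⟨av, ha⟩ ⟨bv, hb⟩
    interval_cases av <;> interval_cases bv <;> simp [Fin.lt_def, E] <;> omega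

end Helpers

lemma claim1 {n : ℕ} (σ : Equiv.Perm (Fin n)) (F : ℕ → ℕ)
    (hF : ∀ i (h : i < n), F i = (σ ⟨i, h⟩ : ℕ))
    (hinj : ∀ i j, i < n → j < n → F i = F j → i = j)
    (A1 : Avoids σ ![2, 1, 4, 3]) (A2 : Avoids σ ![4, 3, 2, 1]) (A3 : Avoids σ ![3, 5, 1, 4, 2]) (A4 : Avoids σ ![3, 5, 2, 1, 4]) (A5 : Avoids σ ![3, 5, 2, 4, 1]) (A6 : Avoids σ ![4, 3, 1, 5, 2]) (A7 : Avoids σ ![5, 3, 1, 4, 2])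
    (t p q d b e : ℕ) (hen : e < n)
    (o1 : p < q) (o2 : q ≤ d) (o3 : d < b) (o4 : b ≤ e) (o5 : t < b)
    (w1 : F q < F p) (w2 : F p < F e) (w3 : F e < F t)
    (w4 : F b < F d) (w5 : F d ≤ F t) (w6 : F b < F t)
    (hsuf : b < e → F b < F e) : False := by
  rcases Nat.eq_or_lt_of_le o4 with hbe | hbe
  · have hbe2 : F b = F e := by rw [hbe]
    rcases Nat.lt_trichotomy q d with h1 | h1 | h1
    · exact A1 (c2143 σ F hF p q d e (by omega) (by omega) (by omega) (by omega) (by omega) (by omega) (by omega))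
    · have h1e : F q = F d := by rw [h1]
      omega
    · omega
  · have hbe2 : F b < F e := hsuf hbe
    rcases Nat.lt_trichotomy t q with h2 | h2 | h2
    · rcases Nat.lt_trichotomy (F t) (F d) with h87 | h87 | h87
      · omega
      · have h87e : t = d := hinj t d (by omega) (by omega) h87
        omega
      · rcases Nat.lt_trichotomy t p with h88 | h88 | h88
        · rcases Nat.lt_trichotomy (F p) (F d) with h113 | h113 | h113
          · rcases Nat.lt_trichotomy q d with h114 | h114 | h114
            · rcases Nat.lt_trichotomy (F p) (F b) with h119 | h119 | h119
              · exact A1 (c2143 σ F hF p q d b (by omega) (by omega) (by omega) (by omega) (by omega) (by omega) (by omega))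
              · have h119e : p = b := hinj p b (by omega) (by omega) h119
                omega
              · rcases Nat.lt_trichotomy (F q) (F b) with h120 | h120 | h120
                · exact A7 (c53142 σ F hF t p q d b (by omega) (by omega) (by omega) (by omega) (by omega) (by omega) (by omega) (by omega) (by omega))
                · have h120e : q = b := hinj q b (by omega) (by omega) h120
                  omega
                · exact A2 (c4321 σ F hF t p q b (by omega) (by omega) (by omega) (by omega) (by omega) (by omega) (by omega))
            · have h114e : F q = F d := by rw [h114]
              omega
            · omega
          · have h113e : p = d := hinj p d (by omega) (by omega) h113
            omega
          · exact A2 (c4321 σ F hF t p d b (by omega) (by omega) (by omega) (by omega) (by omega) (by omega) (by omega))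
        · have h88e : F t = F p := by rw [h88]
          omega
        · rcases Nat.lt_trichotomy (F p) (F d) with h121 | h121 | h121
          · rcases Nat.lt_trichotomy q d with h122 | h122 | h122
            · rcases Nat.lt_trichotomy (F p) (F b) with h127 | h127 | h127
              · exact A1 (c2143 σ F hF p q d b (by omega) (by omega) (by omega) (by omega) (by omega) (by omega) (by omega))
              · have h127e : p = b := hinj p b (by omega) (by omega) h127
                omega
              · rcases Nat.lt_trichotomy (F q) (F b) with h128 | h128 | h128
                · exact A3 (c35142 σ F hF p t q d b (by omega) (by omega) (by omega) (by omega) (by omega) (by omega) (by omega) (by omega) (by omega))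
                · have h128e : q = b := hinj q b (by omega) (by omega) h128
                  omega
                · exact A4 (c35214 σ F hF p t q b e (by omega) (by omega) (by omega) (by omega) (by omega) (by omega) (by omega) (by omega) (by omega))
            · have h122e : F q = F d := by rw [h122]
              omega
            · omega
          · have h121e : p = d := hinj p d (by omega) (by omega) h121
            omega
          · exact A4 (c35214 σ F hF p t d b e (by omega) (by omega) (by omega) (by omega) (by omega) (by omega) (by omega) (by omega) (by omega))
    · have h2e : F t = F q := by rw [h2]
      omega
    · exact A1 (c2143 σ F hF p q t e (by omega) (by omega) (by omega) (by omega) (by omega) (by omega) (by omega))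

lemma claim2 {n : ℕ} (σ : Equiv.Perm (Fin n)) (F : ℕ → ℕ)
    (hF : ∀ i (h : i < n), F i = (σ ⟨i, h⟩ : ℕ))
    (hinj : ∀ i j, i < n → j < n → F i = F j → i = j)
    (A1 : Avoids σ ![2, 1, 4, 3]) (A2 : Avoids σ ![4, 3, 2, 1]) (A3 : Avoids σ ![3, 5, 1, 4, 2]) (A4 : Avoids σ ![3, 5, 2, 1, 4]) (A5 : Avoids σ ![3, 5, 2, 4, 1]) (A6 : Avoids σ ![4, 3, 1, 5, 2]) (A7 : Avoids σ ![5, 3, 1, 4, 2])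
    (p q p2 q2 d b e : ℕ) (hen : e < n)
    (o1 : p < q) (o2 : q ≤ d) (o3 : p2 < q2) (o4 : q2 ≤ d) (o5 : d < b) (o6 : b ≤ e)
    (w1 : F q < F p) (w2 : F p ≤ F q2) (w3 : F q2 < F p2)
    (w4 : F e < F p) (w5 : F e < F p2) (w6 : F b < F d)
    (hsuf : b < e → F b < F e) : False := by
  rcases Nat.eq_or_lt_of_le o6 with hbe | hbe
  · have hbe2 : F b = F e := by rw [hbe]
    rcases Nat.lt_trichotomy p p2 with h129 | h129 | h129
    · rcases Nat.lt_trichotomy (F p) (F q2) with h250 | h250 | h250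
      · rcases Nat.lt_trichotomy q p2 with h251 | h251 | h251
        · exact A1 (c2143 σ F hF p q p2 q2 (by omega) (by omega) (by omega) (by omega) (by omega) (by omega) (by omega))
        · have h251e : F q = F p2 := by rw [h251]
          omega
        · rcases Nat.lt_trichotomy (F p) (F d) with h279 | h279 | h279
          · rcases Nat.lt_trichotomy q d with h280 | h280 | h280
            · rcases Nat.lt_trichotomy q q2 with h297 | h297 | h297
              · rcases Nat.lt_trichotomy (F q) (F e) with h302 | h302 | h302
                · exact A3 (c35142 σ F hF p p2 q q2 e (by omega) (by omega) (by omega) (by omega) (by omega) (by omega) (by omega) (by omega) (by omega))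
                · have h302e : q = e := hinj q e (by omega) (by omega) h302
                  omega
                · exact A5 (c35241 σ F hF p p2 q q2 e (by omega) (by omega) (by omega) (by omega) (by omega) (by omega) (by omega) (by omega) (by omega))
              · have h297e : F q = F q2 := by rw [h297]
                omega
              · rcases Nat.lt_trichotomy (F q) (F e) with h303 | h303 | h303
                · rcases Nat.lt_trichotomy (F p2) (F d) with h304 | h304 | h304
                  · exact A6 (c43152 σ F hF p2 q2 q d e (by omega) (by omega) (by omega) (by omega) (by omega) (by omega) (by omega) (by omega) (by omega))
                  · have h304e : p2 = d := hinj p2 d (by omega) (by omega) h304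
                    omega
                  · exact A3 (c35142 σ F hF p p2 q d e (by omega) (by omega) (by omega) (by omega) (by omega) (by omega) (by omega) (by omega) (by omega))
                · have h303e : q = e := hinj q e (by omega) (by omega) h303
                  omega
                · exact A2 (c4321 σ F hF p2 q2 q e (by omega) (by omega) (by omega) (by omega) (by omega) (by omega) (by omega))
            · have h280e : F q = F d := by rw [h280]
              omega
            · omega
          · have h279e : p = d := hinj p d (by omega) (by omega) h279
            omega
          · rcases Nat.lt_trichotomy q2 d with h305 | h305 | h305
            · exact A2 (c4321 σ F hF p2 q2 d e (by omega) (by omega) (by omega) (by omega) (by omega) (by omega) (by omega))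
            · have h305e : F q2 = F d := by rw [h305]
              omega
            · omega
      · have h250e : p = q2 := hinj p q2 (by omega) (by omega) h250
        omega
      · omega
    · have h129e : F p = F p2 := by rw [h129]
      omega
    · rcases Nat.lt_trichotomy (F p) (F d) with h306 | h306 | h306
      · rcases Nat.lt_trichotomy q d with h307 | h307 | h307
        · rcases Nat.lt_trichotomy (F q) (F e) with h312 | h312 | h312
          · rcases Nat.lt_trichotomy (F p2) (F d) with h313 | h313 | h313
            · exact A6 (c43152 σ F hF p2 p q d e (by omega) (by omega) (by omega) (by omega) (by omega) (by omega) (by omega) (by omega) (by omega))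
            · have h313e : p2 = d := hinj p2 d (by omega) (by omega) h313
              omega
            · exact A7 (c53142 σ F hF p2 p q d e (by omega) (by omega) (by omega) (by omega) (by omega) (by omega) (by omega) (by omega) (by omega))
          · have h312e : q = e := hinj q e (by omega) (by omega) h312
            omega
          · exact A2 (c4321 σ F hF p2 p q e (by omega) (by omega) (by omega) (by omega) (by omega) (by omega) (by omega))
        · have h307e : F q = F d := by rw [h307]
          omega
        · omega
      · have h306e : p = d := hinj p d (by omega) (by omega) h306
        omega
      · exact A2 (c4321 σ F hF p2 p d e (by omega) (by omega) (by omega) (by omega) (by omega) (by omega) (by omega))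
  · have hbe2 : F b < F e := hsuf hbe
    rcases Nat.lt_trichotomy p p2 with h314 | h314 | h314
    · rcases Nat.lt_trichotomy (F p) (F q2) with h435 | h435 | h435
      · rcases Nat.lt_trichotomy q p2 with h436 | h436 | h436
        · exact A1 (c2143 σ F hF p q p2 q2 (by omega) (by omega) (by omega) (by omega) (by omega) (by omega) (by omega))
        · have h436e : F q = F p2 := by rw [h436]
          omega
        · rcases Nat.lt_trichotomy (F p) (F d) with h464 | h464 | h464
          · rcases Nat.lt_trichotomy q d with h465 | h465 | h465
            · rcases Nat.lt_trichotomy q q2 with h482 | h482 | h482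
              · rcases Nat.lt_trichotomy (F q) (F b) with h487 | h487 | h487
                · exact A3 (c35142 σ F hF p p2 q q2 b (by omega) (by omega) (by omega) (by omega) (by omega) (by omega) (by omega) (by omega) (by omega))
                · have h487e : q = b := hinj q b (by omega) (by omega) h487
                  omega
                · exact A5 (c35241 σ F hF p p2 q q2 b (by omega) (by omega) (by omega) (by omega) (by omega) (by omega) (by omega) (by omega) (by omega))
              · have h482e : F q = F q2 := by rw [h482]
                omega
              · rcases Nat.lt_trichotomy (F q) (F b) with h488 | h488 | h488
                · rcases Nat.lt_trichotomy (F p2) (F d) with h489 | h489 | h489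
                  · exact A6 (c43152 σ F hF p2 q2 q d b (by omega) (by omega) (by omega) (by omega) (by omega) (by omega) (by omega) (by omega) (by omega))
                  · have h489e : p2 = d := hinj p2 d (by omega) (by omega) h489
                    omega
                  · exact A3 (c35142 σ F hF p p2 q d b (by omega) (by omega) (by omega) (by omega) (by omega) (by omega) (by omega) (by omega) (by omega))
                · have h488e : q = b := hinj q b (by omega) (by omega) h488
                  omega
                · exact A2 (c4321 σ F hF p2 q2 q b (by omega) (by omega) (by omega) (by omega) (by omega) (by omega) (by omega))
            · have h465e : F q = F d := by rw [h465]
              omega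
            · omega
          · have h464e : p = d := hinj p d (by omega) (by omega) h464
            omega
          · rcases Nat.lt_trichotomy q2 d with h490 | h490 | h490
            · exact A2 (c4321 σ F hF p2 q2 d b (by omega) (by omega) (by omega) (by omega) (by omega) (by omega) (by omega))
            · have h490e : F q2 = F d := by rw [h490]
              omega
            · omega
      · have h435e : p = q2 := hinj p q2 (by omega) (by omega) h435
        omega
      · omega
    · have h314e : F p = F p2 := by rw [h314]
      omega
    · rcases Nat.lt_trichotomy (F p) (F d) with h491 | h491 | h491
      · rcases Nat.lt_trichotomy q d with h492 | h492 | h492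
        · rcases Nat.lt_trichotomy (F q) (F b) with h497 | h497 | h497
          · rcases Nat.lt_trichotomy (F p2) (F d) with h498 | h498 | h498
            · exact A6 (c43152 σ F hF p2 p q d b (by omega) (by omega) (by omega) (by omega) (by omega) (by omega) (by omega) (by omega) (by omega))
            · have h498e : p2 = d := hinj p2 d (by omega) (by omega) h498
              omega
            · exact A7 (c53142 σ F hF p2 p q d b (by omega) (by omega) (by omega) (by omega) (by omega) (by omega) (by omega) (by omega) (by omega))
          · have h497e : q = b := hinj q b (by omega) (by omega) h497
            omega
          · exact A2 (c4321 σ F hF p2 p q b (by omega) (by omega) (by omega) (by omega) (by omega) (by omega) (by omega))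
        · have h492e : F q = F d := by rw [h492]
          omega
        · omega
      · have h491e : p = d := hinj p d (by omega) (by omega) h491
        omega
      · exact A2 (c4321 σ F hF p2 p d b (by omega) (by omega) (by omega) (by omega) (by omega) (by omega) (by omega))

lemma buildGrid {n : ℕ} (σ : Equiv.Perm (Fin n)) (F : ℕ → ℕ)
    (hF : ∀ i (h : i < n), F i = (σ ⟨i, h⟩ : ℕ))
    (x1 y1 m : ℕ) (hx1m : x1 ≤ m) (hy1m : y1 ≤ m) (hmn : m ≤ n)
    (hid : ∀ i, i < n → m ≤ i → F i = i)
    (hAm : ∀ i, i < m → F i < m)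
    (hsuffix : ∀ i j, x1 ≤ i → i < j → j < m → F i < F j)
    (hsufval : ∀ i, x1 ≤ i → i < m → F i < y1)
    (hlow : ∀ i j, i < j → j < x1 → F i < y1 → F j < y1 → F i < F j)
    (hhigh : ∀ i j, i < j → j < x1 → y1 ≤ F i → y1 ≤ F j → F i < F j) :
    InGrid gridB σ := by
  have hx1n : x1 ≤ n := le_trans hx1m hmn
  have E : ∀ p : Fin n, (σ p : ℕ) = F p.val := by
    intro p; rw [hF p.val p.isLt]
  have EPlt : ∀ p q : Fin n, (σ p < σ q) ↔ F p.val < F q.val := by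
    intro p q; rw [Fin.lt_def, E, E]
  refine ⟨![0, x1, m, n], ![0, y1, m, n], ?_, ?_, rfl, rfl, rfl, rfl, ?_⟩
  · rintro ⟨iv, hi⟩ ⟨jv, hj⟩ hij
    rw [Fin.mk_le_mk] at hij
    interval_cases iv <;> interval_cases jv <;> simp <;> omega
  · rintro ⟨iv, hi⟩ ⟨jv, hj⟩ hij
    rw [Fin.mk_le_mk] at hij
    interval_cases iv <;> interval_cases jv <;> simp <;> omega
  have r1 : (Fin.castSucc (0 : Fin 3)) = (0 : Fin 4) := rfl
  have r2 : (Fin.castSucc (1 : Fin 3)) = (1 : Fin 4) := rfl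
  have r3 : (Fin.castSucc (2 : Fin 3)) = (2 : Fin 4) := rfl
  have r4 : (Fin.succ (0 : Fin 3)) = (1 : Fin 4) := rfl
  have r5 : (Fin.succ (1 : Fin 3)) = (2 : Fin 4) := rfl
  have r6 : (Fin.succ (2 : Fin 3)) = (3 : Fin 4) := rfl
  intro i j
  refine ⟨?_, ?_, ?_, ?_⟩
  · -- zero cells
    intro hz p hp
    obtain ⟨c1, c2, c3, c4⟩ := hp
    rw [E] at c3 c4
    have hpn := p.isLt
    fin_cases i <;> fin_cases j <;> simp [gridB, r1, r2, r3, r4, r5, r6] at hz c1 c2 c3 c4 ⊢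
    · -- (0,2) : p < x1, F p ≥ m
      have := hAm p.val (by omega); omega
    · -- (1,1)
      have := hsufval p.val (by omega) (by omega); omega
    · -- (1,2)
      have := hAm p.val (by omega); omega
    · -- (2,0)
      have := hid p.val (by omega) (by omega); omega
    · -- (2,1)
      have := hid p.val (by omega) (by omega); omega
  · -- increasing cells
    intro ho p q hp hq hpq
    obtain ⟨c1, c2, c3, c4⟩ := hp
    obtain ⟨d1, d2, d3, d4⟩ := hq
    rw [E] at c3 c4 d3 d4
    rw [Fin.lt_def] at hpq
    rw [EPlt]
    have hpn := p.isLt; have hqn := q.isLt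
    fin_cases i <;> fin_cases j <;> simp [gridB, r1, r2, r3, r4, r5, r6] at ho c1 c2 c3 c4 d1 d2 d3 d4 ⊢
    all_goals first
      | (exact hlow p.val q.val hpq (by omega) (by omega) (by omega))
      | (exact hhigh p.val q.val hpq (by omega) (by omega) (by omega))
      | (exact hsuffix p.val q.val (by omega) hpq (by omega))
      | (have e1 := hid p.val (by omega) (by omega)
         have e2 := hid q.val (by omega) (by omega)
         omega)
  · intro hz
    exfalso; revert hz; fin_cases i <;> fin_cases j <;> decide
  · intro hz
    exfalso; revert hz; fin_cases i <;> fin_cases j <;> decide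

def cellCol : Fin 4 → Fin 3 := ![0, 0, 1, 2]
def cellRow : Fin 4 → Fin 3 := ![0, 1, 0, 2]

lemma forward_exists {n k : ℕ} (σ : Equiv.Perm (Fin n)) (pat : Fin k → ℕ)
    (hgrid : InGrid gridB σ) (hC : Contains σ pat) :
    ∃ L : Fin k → Fin 4, ∀ a b : Fin k, a < b →
      (cellCol (L a) ≤ cellCol (L b) ∧ (cellRow (L a) < cellRow (L b) → pat a < pat b) ∧
       (cellRow (L b) < cellRow (L a) → pat b < pat a) ∧ (L a = L b → pat a < pat b)) := by
  obtain ⟨x, y, hxm, hym, hx0, hxl, hy0, hyl, hcell⟩ := hgrid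
  obtain ⟨f, hf, hiff⟩ := hC
  have hloc : ∀ p : Fin n, ∃ c : Fin 4, InCell x y σ (cellCol c) (cellRow c) p := by
    intro p
    have hcol : ∃ i : Fin 3, x i.castSucc ≤ (p : ℕ) ∧ (p : ℕ) < x i.succ := by
      rcases Nat.lt_or_ge (p : ℕ) (x 1) with h | h
      · exact ⟨0, by rw [show Fin.castSucc (0 : Fin 3) = (0 : Fin 4) from rfl, hx0]; omega,
          by rw [show Fin.succ (0 : Fin 3) = (1 : Fin 4) from rfl]; exact h⟩
      · rcases Nat.lt_or_ge (p : ℕ) (x 2) with h2 | h2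
        · exact ⟨1, by rw [show Fin.castSucc (1 : Fin 3) = (1 : Fin 4) from rfl]; exact h,
            by rw [show Fin.succ (1 : Fin 3) = (2 : Fin 4) from rfl]; exact h2⟩
        · refine ⟨2, by rw [show Fin.castSucc (2 : Fin 3) = (2 : Fin 4) from rfl]; exact h2, ?_⟩
          rw [show Fin.succ (2 : Fin 3) = Fin.last 3 from rfl, hxl]; exact p.isLt
    have hrow : ∃ j : Fin 3, y j.castSucc ≤ ((σ p : Fin n) : ℕ) ∧ ((σ p : Fin n) : ℕ) < y j.succ := by
      rcases Nat.lt_or_ge ((σ p : Fin n) : ℕ) (y 1) with h | h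
      · exact ⟨0, by rw [show Fin.castSucc (0 : Fin 3) = (0 : Fin 4) from rfl, hy0]; omega,
          by rw [show Fin.succ (0 : Fin 3) = (1 : Fin 4) from rfl]; exact h⟩
      · rcases Nat.lt_or_ge ((σ p : Fin n) : ℕ) (y 2) with h2 | h2
        · exact ⟨1, by rw [show Fin.castSucc (1 : Fin 3) = (1 : Fin 4) from rfl]; exact h,
            by rw [show Fin.succ (1 : Fin 3) = (2 : Fin 4) from rfl]; exact h2⟩
        · refine ⟨2, by rw [show Fin.castSucc (2 : Fin 3) = (2 : Fin 4) from rfl]; exact h2, ?_⟩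
          rw [show Fin.succ (2 : Fin 3) = Fin.last 3 from rfl, hyl]; exact (σ p).isLt
    obtain ⟨i, hi1, hi2⟩ := hcol
    obtain ⟨j, hj1, hj2⟩ := hrow
    have hcellp : InCell x y σ i j p := ⟨hi1, hi2, hj1, hj2⟩
    have hnz : gridB i j ≠ 0 := fun h => (hcell i j).1 h p hcellp
    fin_cases i <;> fin_cases j
    · exact ⟨0, hcellp⟩
    · exact ⟨1, hcellp⟩
    · exact absurd (by decide) hnz
    · exact ⟨2, hcellp⟩
    · exact absurd (by decide) hnz
    · exact absurd (by decide) hnz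
    · exact absurd (by decide) hnz
    · exact absurd (by decide) hnz
    · exact ⟨3, hcellp⟩
  choose L hL using fun a => hloc (f a)
  refine ⟨L, fun a b hab => ?_⟩
  have hfab : f a < f b := hf hab
  have hfabv : (f a : ℕ) < (f b : ℕ) := hfab
  have Ha := hL a
  have Hb := hL b
  refine ⟨?_, ?_, ?_, ?_⟩
  · by_contra hcc
    push_neg at hcc
    have hle : (cellCol (L b)).succ ≤ (cellCol (L a)).castSucc := by
      rw [Fin.le_def, Fin.val_succ, Fin.coe_castSucc]
      rw [Fin.lt_def] at hcc
      omega
    have h1 := hxm hle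
    have h2 := Ha.1
    have h3 := Hb.2.1
    omega
  · intro hrr
    have hle : (cellRow (L a)).succ ≤ (cellRow (L b)).castSucc := by
      rw [Fin.le_def, Fin.val_succ, Fin.coe_castSucc]
      rw [Fin.lt_def] at hrr
      omega
    have h1 := hym hle
    have h2 := Ha.2.2.2
    have h3 := Hb.2.2.1
    have h4 : σ (f a) < σ (f b) := by rw [Fin.lt_def]; omega
    exact (hiff a b).mp h4
  · intro hrr
    have hle : (cellRow (L b)).succ ≤ (cellRow (L a)).castSucc := by
      rw [Fin.le_def, Fin.val_succ, Fin.coe_castSucc]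
      rw [Fin.lt_def] at hrr
      omega
    have h1 := hym hle
    have h2 := Hb.2.2.2
    have h3 := Ha.2.2.1
    have h4 : σ (f b) < σ (f a) := by rw [Fin.lt_def]; omega
    exact (hiff b a).mp h4
  · intro hLL
    have hone : gridB (cellCol (L a)) (cellRow (L a)) = 1 := by
      have : ∀ c : Fin 4, gridB (cellCol c) (cellRow c) = 1 := by decide
      exact this (L a)
    have h4 : σ (f a) < σ (f b) :=
      (hcell (cellCol (L a)) (cellRow (L a))).2.1 hone (f a) (f b) Ha (hLL ▸ Hb) hfab
    exact (hiff a b).mp h4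

lemma noLab1 : ∀ c0 c1 c2 c3 : Fin 4,
    ¬ ((cellCol c0 ≤ cellCol c1 ∧ (cellRow c0 < cellRow c1 → (2:ℕ) < 1) ∧ (cellRow c1 < cellRow c0 → (1:ℕ) < 2) ∧ (c0 = c1 → (2:ℕ) < 1)) ∧
      (cellCol c0 ≤ cellCol c2 ∧ (cellRow c0 < cellRow c2 → (2:ℕ) < 4) ∧ (cellRow c2 < cellRow c0 → (4:ℕ) < 2) ∧ (c0 = c2 → (2:ℕ) < 4)) ∧
      (cellCol c0 ≤ cellCol c3 ∧ (cellRow c0 < cellRow c3 → (2:ℕ) < 3) ∧ (cellRow c3 < cellRow c0 → (3:ℕ) < 2) ∧ (c0 = c3 → (2:ℕ) < 3)) ∧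
      (cellCol c1 ≤ cellCol c2 ∧ (cellRow c1 < cellRow c2 → (1:ℕ) < 4) ∧ (cellRow c2 < cellRow c1 → (4:ℕ) < 1) ∧ (c1 = c2 → (1:ℕ) < 4)) ∧
      (cellCol c1 ≤ cellCol c3 ∧ (cellRow c1 < cellRow c3 → (1:ℕ) < 3) ∧ (cellRow c3 < cellRow c1 → (3:ℕ) < 1) ∧ (c1 = c3 → (1:ℕ) < 3)) ∧
      (cellCol c2 ≤ cellCol c3 ∧ (cellRow c2 < cellRow c3 → (4:ℕ) < 3) ∧ (cellRow c3 < cellRow c2 → (3:ℕ) < 4) ∧ (c2 = c3 → (4:ℕ) < 3))) := by decide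

lemma noLab2 : ∀ c0 c1 c2 c3 : Fin 4,
    ¬ ((cellCol c0 ≤ cellCol c1 ∧ (cellRow c0 < cellRow c1 → (4:ℕ) < 3) ∧ (cellRow c1 < cellRow c0 → (3:ℕ) < 4) ∧ (c0 = c1 → (4:ℕ) < 3)) ∧
      (cellCol c0 ≤ cellCol c2 ∧ (cellRow c0 < cellRow c2 → (4:ℕ) < 2) ∧ (cellRow c2 < cellRow c0 → (2:ℕ) < 4) ∧ (c0 = c2 → (4:ℕ) < 2)) ∧
      (cellCol c0 ≤ cellCol c3 ∧ (cellRow c0 < cellRow c3 → (4:ℕ) < 1) ∧ (cellRow c3 < cellRow c0 → (1:ℕ) < 4) ∧ (c0 = c3 → (4:ℕ) < 1)) ∧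
      (cellCol c1 ≤ cellCol c2 ∧ (cellRow c1 < cellRow c2 → (3:ℕ) < 2) ∧ (cellRow c2 < cellRow c1 → (2:ℕ) < 3) ∧ (c1 = c2 → (3:ℕ) < 2)) ∧
      (cellCol c1 ≤ cellCol c3 ∧ (cellRow c1 < cellRow c3 → (3:ℕ) < 1) ∧ (cellRow c3 < cellRow c1 → (1:ℕ) < 3) ∧ (c1 = c3 → (3:ℕ) < 1)) ∧
      (cellCol c2 ≤ cellCol c3 ∧ (cellRow c2 < cellRow c3 → (2:ℕ) < 1) ∧ (cellRow c3 < cellRow c2 → (1:ℕ) < 2) ∧ (c2 = c3 → (2:ℕ) < 1))) := by decide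

lemma noLab3 : ∀ c0 c1 c2 c3 c4 : Fin 4,
    ¬ ((cellCol c0 ≤ cellCol c1 ∧ (cellRow c0 < cellRow c1 → (3:ℕ) < 5) ∧ (cellRow c1 < cellRow c0 → (5:ℕ) < 3) ∧ (c0 = c1 → (3:ℕ) < 5)) ∧
      (cellCol c0 ≤ cellCol c2 ∧ (cellRow c0 < cellRow c2 → (3:ℕ) < 1) ∧ (cellRow c2 < cellRow c0 → (1:ℕ) < 3) ∧ (c0 = c2 → (3:ℕ) < 1)) ∧
      (cellCol c0 ≤ cellCol c3 ∧ (cellRow c0 < cellRow c3 → (3:ℕ) < 4) ∧ (cellRow c3 < cellRow c0 → (4:ℕ) < 3) ∧ (c0 = c3 → (3:ℕ) < 4)) ∧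
      (cellCol c0 ≤ cellCol c4 ∧ (cellRow c0 < cellRow c4 → (3:ℕ) < 2) ∧ (cellRow c4 < cellRow c0 → (2:ℕ) < 3) ∧ (c0 = c4 → (3:ℕ) < 2)) ∧
      (cellCol c1 ≤ cellCol c2 ∧ (cellRow c1 < cellRow c2 → (5:ℕ) < 1) ∧ (cellRow c2 < cellRow c1 → (1:ℕ) < 5) ∧ (c1 = c2 → (5:ℕ) < 1)) ∧
      (cellCol c1 ≤ cellCol c3 ∧ (cellRow c1 < cellRow c3 → (5:ℕ) < 4) ∧ (cellRow c3 < cellRow c1 → (4:ℕ) < 5) ∧ (c1 = c3 → (5:ℕ) < 4)) ∧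
      (cellCol c1 ≤ cellCol c4 ∧ (cellRow c1 < cellRow c4 → (5:ℕ) < 2) ∧ (cellRow c4 < cellRow c1 → (2:ℕ) < 5) ∧ (c1 = c4 → (5:ℕ) < 2)) ∧
      (cellCol c2 ≤ cellCol c3 ∧ (cellRow c2 < cellRow c3 → (1:ℕ) < 4) ∧ (cellRow c3 < cellRow c2 → (4:ℕ) < 1) ∧ (c2 = c3 → (1:ℕ) < 4)) ∧
      (cellCol c2 ≤ cellCol c4 ∧ (cellRow c2 < cellRow c4 → (1:ℕ) < 2) ∧ (cellRow c4 < cellRow c2 → (2:ℕ) < 1) ∧ (c2 = c4 → (1:ℕ) < 2)) ∧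
      (cellCol c3 ≤ cellCol c4 ∧ (cellRow c3 < cellRow c4 → (4:ℕ) < 2) ∧ (cellRow c4 < cellRow c3 → (2:ℕ) < 4) ∧ (c3 = c4 → (4:ℕ) < 2))) := by decide

lemma noLab4 : ∀ c0 c1 c2 c3 c4 : Fin 4,
    ¬ ((cellCol c0 ≤ cellCol c1 ∧ (cellRow c0 < cellRow c1 → (3:ℕ) < 5) ∧ (cellRow c1 < cellRow c0 → (5:ℕ) < 3) ∧ (c0 = c1 → (3:ℕ) < 5)) ∧
      (cellCol c0 ≤ cellCol c2 ∧ (cellRow c0 < cellRow c2 → (3:ℕ) < 2) ∧ (cellRow c2 < cellRow c0 → (2:ℕ) < 3) ∧ (c0 = c2 → (3:ℕ) < 2)) ∧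
      (cellCol c0 ≤ cellCol c3 ∧ (cellRow c0 < cellRow c3 → (3:ℕ) < 1) ∧ (cellRow c3 < cellRow c0 → (1:ℕ) < 3) ∧ (c0 = c3 → (3:ℕ) < 1)) ∧
      (cellCol c0 ≤ cellCol c4 ∧ (cellRow c0 < cellRow c4 → (3:ℕ) < 4) ∧ (cellRow c4 < cellRow c0 → (4:ℕ) < 3) ∧ (c0 = c4 → (3:ℕ) < 4)) ∧
      (cellCol c1 ≤ cellCol c2 ∧ (cellRow c1 < cellRow c2 → (5:ℕ) < 2) ∧ (cellRow c2 < cellRow c1 → (2:ℕ) < 5) ∧ (c1 = c2 → (5:ℕ) < 2)) ∧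
      (cellCol c1 ≤ cellCol c3 ∧ (cellRow c1 < cellRow c3 → (5:ℕ) < 1) ∧ (cellRow c3 < cellRow c1 → (1:ℕ) < 5) ∧ (c1 = c3 → (5:ℕ) < 1)) ∧
      (cellCol c1 ≤ cellCol c4 ∧ (cellRow c1 < cellRow c4 → (5:ℕ) < 4) ∧ (cellRow c4 < cellRow c1 → (4:ℕ) < 5) ∧ (c1 = c4 → (5:ℕ) < 4)) ∧
      (cellCol c2 ≤ cellCol c3 ∧ (cellRow c2 < cellRow c3 → (2:ℕ) < 1) ∧ (cellRow c3 < cellRow c2 → (1:ℕ) < 2) ∧ (c2 = c3 → (2:ℕ) < 1)) ∧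
      (cellCol c2 ≤ cellCol c4 ∧ (cellRow c2 < cellRow c4 → (2:ℕ) < 4) ∧ (cellRow c4 < cellRow c2 → (4:ℕ) < 2) ∧ (c2 = c4 → (2:ℕ) < 4)) ∧
      (cellCol c3 ≤ cellCol c4 ∧ (cellRow c3 < cellRow c4 → (1:ℕ) < 4) ∧ (cellRow c4 < cellRow c3 → (4:ℕ) < 1) ∧ (c3 = c4 → (1:ℕ) < 4))) := by decide

lemma noLab5 : ∀ c0 c1 c2 c3 c4 : Fin 4,
    ¬ ((cellCol c0 ≤ cellCol c1 ∧ (cellRow c0 < cellRow c1 → (3:ℕ) < 5) ∧ (cellRow c1 < cellRow c0 → (5:ℕ) < 3) ∧ (c0 = c1 → (3:ℕ) < 5)) ∧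
      (cellCol c0 ≤ cellCol c2 ∧ (cellRow c0 < cellRow c2 → (3:ℕ) < 2) ∧ (cellRow c2 < cellRow c0 → (2:ℕ) < 3) ∧ (c0 = c2 → (3:ℕ) < 2)) ∧
      (cellCol c0 ≤ cellCol c3 ∧ (cellRow c0 < cellRow c3 → (3:ℕ) < 4) ∧ (cellRow c3 < cellRow c0 → (4:ℕ) < 3) ∧ (c0 = c3 → (3:ℕ) < 4)) ∧
      (cellCol c0 ≤ cellCol c4 ∧ (cellRow c0 < cellRow c4 → (3:ℕ) < 1) ∧ (cellRow c4 < cellRow c0 → (1:ℕ) < 3) ∧ (c0 = c4 → (3:ℕ) < 1)) ∧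
      (cellCol c1 ≤ cellCol c2 ∧ (cellRow c1 < cellRow c2 → (5:ℕ) < 2) ∧ (cellRow c2 < cellRow c1 → (2:ℕ) < 5) ∧ (c1 = c2 → (5:ℕ) < 2)) ∧
      (cellCol c1 ≤ cellCol c3 ∧ (cellRow c1 < cellRow c3 → (5:ℕ) < 4) ∧ (cellRow c3 < cellRow c1 → (4:ℕ) < 5) ∧ (c1 = c3 → (5:ℕ) < 4)) ∧
      (cellCol c1 ≤ cellCol c4 ∧ (cellRow c1 < cellRow c4 → (5:ℕ) < 1) ∧ (cellRow c4 < cellRow c1 → (1:ℕ) < 5) ∧ (c1 = c4 → (5:ℕ) < 1)) ∧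
      (cellCol c2 ≤ cellCol c3 ∧ (cellRow c2 < cellRow c3 → (2:ℕ) < 4) ∧ (cellRow c3 < cellRow c2 → (4:ℕ) < 2) ∧ (c2 = c3 → (2:ℕ) < 4)) ∧
      (cellCol c2 ≤ cellCol c4 ∧ (cellRow c2 < cellRow c4 → (2:ℕ) < 1) ∧ (cellRow c4 < cellRow c2 → (1:ℕ) < 2) ∧ (c2 = c4 → (2:ℕ) < 1)) ∧
      (cellCol c3 ≤ cellCol c4 ∧ (cellRow c3 < cellRow c4 → (4:ℕ) < 1) ∧ (cellRow c4 < cellRow c3 → (1:ℕ) < 4) ∧ (c3 = c4 → (4:ℕ) < 1))) := by decide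

lemma noLab6 : ∀ c0 c1 c2 c3 c4 : Fin 4,
    ¬ ((cellCol c0 ≤ cellCol c1 ∧ (cellRow c0 < cellRow c1 → (4:ℕ) < 3) ∧ (cellRow c1 < cellRow c0 → (3:ℕ) < 4) ∧ (c0 = c1 → (4:ℕ) < 3)) ∧
      (cellCol c0 ≤ cellCol c2 ∧ (cellRow c0 < cellRow c2 → (4:ℕ) < 1) ∧ (cellRow c2 < cellRow c0 → (1:ℕ) < 4) ∧ (c0 = c2 → (4:ℕ) < 1)) ∧
      (cellCol c0 ≤ cellCol c3 ∧ (cellRow c0 < cellRow c3 → (4:ℕ) < 5) ∧ (cellRow c3 < cellRow c0 → (5:ℕ) < 4) ∧ (c0 = c3 → (4:ℕ) < 5)) ∧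
      (cellCol c0 ≤ cellCol c4 ∧ (cellRow c0 < cellRow c4 → (4:ℕ) < 2) ∧ (cellRow c4 < cellRow c0 → (2:ℕ) < 4) ∧ (c0 = c4 → (4:ℕ) < 2)) ∧
      (cellCol c1 ≤ cellCol c2 ∧ (cellRow c1 < cellRow c2 → (3:ℕ) < 1) ∧ (cellRow c2 < cellRow c1 → (1:ℕ) < 3) ∧ (c1 = c2 → (3:ℕ) < 1)) ∧
      (cellCol c1 ≤ cellCol c3 ∧ (cellRow c1 < cellRow c3 → (3:ℕ) < 5) ∧ (cellRow c3 < cellRow c1 → (5:ℕ) < 3) ∧ (c1 = c3 → (3:ℕ) < 5)) ∧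
      (cellCol c1 ≤ cellCol c4 ∧ (cellRow c1 < cellRow c4 → (3:ℕ) < 2) ∧ (cellRow c4 < cellRow c1 → (2:ℕ) < 3) ∧ (c1 = c4 → (3:ℕ) < 2)) ∧
      (cellCol c2 ≤ cellCol c3 ∧ (cellRow c2 < cellRow c3 → (1:ℕ) < 5) ∧ (cellRow c3 < cellRow c2 → (5:ℕ) < 1) ∧ (c2 = c3 → (1:ℕ) < 5)) ∧
      (cellCol c2 ≤ cellCol c4 ∧ (cellRow c2 < cellRow c4 → (1:ℕ) < 2) ∧ (cellRow c4 < cellRow c2 → (2:ℕ) < 1) ∧ (c2 = c4 → (1:ℕ) < 2)) ∧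
      (cellCol c3 ≤ cellCol c4 ∧ (cellRow c3 < cellRow c4 → (5:ℕ) < 2) ∧ (cellRow c4 < cellRow c3 → (2:ℕ) < 5) ∧ (c3 = c4 → (5:ℕ) < 2))) := by decide

lemma noLab7 : ∀ c0 c1 c2 c3 c4 : Fin 4,
    ¬ ((cellCol c0 ≤ cellCol c1 ∧ (cellRow c0 < cellRow c1 → (5:ℕ) < 3) ∧ (cellRow c1 < cellRow c0 → (3:ℕ) < 5) ∧ (c0 = c1 → (5:ℕ) < 3)) ∧
      (cellCol c0 ≤ cellCol c2 ∧ (cellRow c0 < cellRow c2 → (5:ℕ) < 1) ∧ (cellRow c2 < cellRow c0 → (1:ℕ) < 5) ∧ (c0 = c2 → (5:ℕ) < 1)) ∧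
      (cellCol c0 ≤ cellCol c3 ∧ (cellRow c0 < cellRow c3 → (5:ℕ) < 4) ∧ (cellRow c3 < cellRow c0 → (4:ℕ) < 5) ∧ (c0 = c3 → (5:ℕ) < 4)) ∧
      (cellCol c0 ≤ cellCol c4 ∧ (cellRow c0 < cellRow c4 → (5:ℕ) < 2) ∧ (cellRow c4 < cellRow c0 → (2:ℕ) < 5) ∧ (c0 = c4 → (5:ℕ) < 2)) ∧
      (cellCol c1 ≤ cellCol c2 ∧ (cellRow c1 < cellRow c2 → (3:ℕ) < 1) ∧ (cellRow c2 < cellRow c1 → (1:ℕ) < 3) ∧ (c1 = c2 → (3:ℕ) < 1)) ∧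
      (cellCol c1 ≤ cellCol c3 ∧ (cellRow c1 < cellRow c3 → (3:ℕ) < 4) ∧ (cellRow c3 < cellRow c1 → (4:ℕ) < 3) ∧ (c1 = c3 → (3:ℕ) < 4)) ∧
      (cellCol c1 ≤ cellCol c4 ∧ (cellRow c1 < cellRow c4 → (3:ℕ) < 2) ∧ (cellRow c4 < cellRow c1 → (2:ℕ) < 3) ∧ (c1 = c4 → (3:ℕ) < 2)) ∧
      (cellCol c2 ≤ cellCol c3 ∧ (cellRow c2 < cellRow c3 → (1:ℕ) < 4) ∧ (cellRow c3 < cellRow c2 → (4:ℕ) < 1) ∧ (c2 = c3 → (1:ℕ) < 4)) ∧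
      (cellCol c2 ≤ cellCol c4 ∧ (cellRow c2 < cellRow c4 → (1:ℕ) < 2) ∧ (cellRow c4 < cellRow c2 → (2:ℕ) < 1) ∧ (c2 = c4 → (1:ℕ) < 2)) ∧
      (cellCol c3 ≤ cellCol c4 ∧ (cellRow c3 < cellRow c4 → (4:ℕ) < 2) ∧ (cellRow c4 < cellRow c3 → (2:ℕ) < 4) ∧ (c3 = c4 → (4:ℕ) < 2))) := by decide

lemma backward {n : ℕ} (σ : Equiv.Perm (Fin n))
    (A1 : Avoids σ ![2, 1, 4, 3]) (A2 : Avoids σ ![4, 3, 2, 1])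
    (A3 : Avoids σ ![3, 5, 1, 4, 2]) (A4 : Avoids σ ![3, 5, 2, 1, 4])
    (A5 : Avoids σ ![3, 5, 2, 4, 1]) (A6 : Avoids σ ![4, 3, 1, 5, 2])
    (A7 : Avoids σ ![5, 3, 1, 4, 2]) : InGrid gridB σ := by
  classical
  set F : ℕ → ℕ := fun i => if h : i < n then ((σ ⟨i, h⟩ : Fin n) : ℕ) else i with hFdef
  have hF : ∀ i (h : i < n), F i = ((σ ⟨i, h⟩ : Fin n) : ℕ) := by
    intro i h; simp [hFdef, dif_pos h]
  have hFlt : ∀ i, i < n → F i < n := by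
    intro i h; rw [hF i h]; exact (σ ⟨i, h⟩).isLt
  have hinj : ∀ i j, i < n → j < n → F i = F j → i = j := by
    intro i j hi hj hij
    rw [hF i hi, hF j hj] at hij
    have h2 : σ ⟨i, hi⟩ = σ ⟨j, hj⟩ := Fin.val_injective hij
    have h3 := σ.injective h2
    simpa using h3
  have hex : ∃ k, ∀ i, i < n → k ≤ i → F i = i := ⟨n, by intro i h1 h2; omega⟩
  set m := Nat.find hex with hmdef
  have hm : ∀ i, i < n → m ≤ i → F i = i := Nat.find_spec hex
  have hmn : m ≤ n := Nat.find_le (by intro i h1 h2; omega)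
  by_cases hm0 : m = 0
  · exact buildGrid σ F hF 0 0 m (by omega) (by omega) hmn hm
      (by intro i h; omega) (by intro i j h1 h2 h3; omega)
      (by intro i h1 h2; omega) (by intro i j h1 h2 h3 h4; omega)
      (by intro i j h1 h2 h3 h4; omega)
  · have hne : ¬ ∀ i, i < n → m - 1 ≤ i → F i = i := Nat.find_min hex (by omega)
    push_neg at hne
    obtain ⟨i0, hi0n, hi0ge, hi0ne⟩ := hne
    have hFe : F (m - 1) ≠ m - 1 := by
      rcases Nat.lt_or_ge i0 m with h | h
      · have hi : i0 = m - 1 := by omega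
        rwa [hi] at hi0ne
      · exact absurd (hm i0 hi0n h) hi0ne
    have hAm : ∀ i, i < m → F i < m := by
      intro i him
      by_contra hge
      push_neg at hge
      have hFin : F i < n := hFlt i (by omega)
      have h1 : F (F i) = F i := hm (F i) hFin hge
      have h2 := hinj (F i) i hFin (by omega) h1
      omega
    have hFem : F (m - 1) < m := hAm (m - 1) (by omega)
    obtain ⟨t, htn, hFt⟩ : ∃ t, t < n ∧ F t = m - 1 := by
      have hmn' : m - 1 < n := by omega
      refine ⟨((σ.symm ⟨m - 1, hmn'⟩ : Fin n) : ℕ), (σ.symm ⟨m - 1, hmn'⟩).isLt, ?_⟩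
      rw [hF _ (σ.symm ⟨m - 1, hmn'⟩).isLt]
      rw [show (⟨((σ.symm ⟨m - 1, hmn'⟩ : Fin n) : ℕ), (σ.symm ⟨m - 1, hmn'⟩).isLt⟩ : Fin n)
          = σ.symm ⟨m - 1, hmn'⟩ from rfl, Equiv.apply_symm_apply]
    have htm : t < m := by
      by_contra hge
      push_neg at hge
      have := hm t htn hge
      omega
    have htne : t ≠ m - 1 := by
      intro h; rw [h] at hFt; exact hFe hFt
    have hexQ : ∃ xx, ∀ i j, xx ≤ i → i < j → j < m → F i < F j :=
      ⟨m - 1, by intro i j h1 h2 h3; omega⟩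
    set x1 := Nat.find hexQ with hx1def
    have hx1 : ∀ i j, x1 ≤ i → i < j → j < m → F i < F j := Nat.find_spec hexQ
    have hx1le : x1 ≤ m - 1 := Nat.find_le (by intro i j h1 h2 h3; omega)
    have hdesc : 0 < x1 → F x1 < F (x1 - 1) := by
      intro hx1pos
      have hne2 := Nat.find_min hexQ (show x1 - 1 < x1 by omega)
      push_neg at hne2
      obtain ⟨i, j, h1, h2, h3, h4⟩ := hne2
      have hieq : i = x1 - 1 := by
        by_contra hne3
        exact absurd (hx1 i j (by omega) h2 h3) (by omega)
      subst hieq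
      rcases Nat.lt_or_ge x1 j with hj | hj
      · have h5 := hx1 x1 j le_rfl hj h3
        omega
      · have hjeq : j = x1 := by omega
        subst hjeq
        have hne4 : F (x1 - 1) ≠ F x1 := fun hh => by
          have := hinj (x1 - 1) x1 (by omega) (by omega) hh; omega
        omega
    have htx1 : t < x1 := by
      by_contra hge
      push_neg at hge
      have h1 : t < m - 1 := by omega
      have h2 := hx1 t (m - 1) hge h1 (by omega)
      omega
    set B := (Finset.range x1).filter (fun qq => ∃ pp ∈ Finset.range qq, F qq < F pp) with hBdef
    set K := B.sup F with hKdef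
    set y1 := max (F (m - 1)) K + 1 with hy1def
    have hKmem : ∀ qq ∈ B, F qq ≤ K := fun qq hq => Finset.le_sup hq
    have hKlt : K < m := by
      rw [hKdef]
      refine (Finset.sup_lt_iff (show (⊥ : ℕ) < m by simp only [bot_eq_zero]; omega)).mpr ?_
      intro b hb
      rw [hBdef, Finset.mem_filter, Finset.mem_range] at hb
      exact hAm b (by omega)
    have hy1v : F (m - 1) < y1 := by
      have := le_max_left (F (m - 1)) K; omega
    have hy1K : K < y1 := by
      have := le_max_right (F (m - 1)) K; omega
    have hy1m : y1 ≤ m := by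
      have h1 : max (F (m - 1)) K < m := max_lt hFem hKlt
      omega
    have hclaim1 : ∀ pp qq, pp < qq → qq < x1 → F qq < F pp → F (m - 1) < F pp := by
      intro pp qq h1 h2 h3
      by_contra hle
      push_neg at hle
      have hnee : F pp ≠ F (m - 1) := fun hh => by
        have := hinj pp (m - 1) (by omega) (by omega) hh; omega
      have hd1 := hAm (x1 - 1) (by omega)
      have hx1v := hAm x1 (by omega)
      have hx1t : F x1 ≠ F t := fun hh => by
        have := hinj x1 t (by omega) (by omega) hh; omega
      exact claim1 σ F hF hinj A1 A2 A3 A4 A5 A6 A7 t pp qq (x1 - 1) x1 (m - 1)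
        (by omega) h1 (by omega) (by omega) (by omega) htx1
        h3 (by omega) (by omega) (hdesc (by omega)) (by omega) (by omega)
        (fun hh => hx1 x1 (m - 1) le_rfl hh (by omega))
    have hlow : ∀ i j, i < j → j < x1 → F i < y1 → F j < y1 → F i < F j := by
      intro i j h1 h2 h3 h4
      by_contra h5
      push_neg at h5
      have hne5 : F i ≠ F j := fun hh => by
        have := hinj i j (by omega) (by omega) hh; omega
      have hji : F j < F i := by omega
      have hjB : j ∈ B := by
        rw [hBdef, Finset.mem_filter, Finset.mem_range]
        exact ⟨h2, i, Finset.mem_range.mpr h1, hji⟩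
      have hjK : F j ≤ K := hKmem j hjB
      have hv : F (m - 1) < F i := hclaim1 i j h1 h2 hji
      have hKi : K < F i := by
        by_contra h6
        push_neg at h6
        obtain ⟨b0, hb0B, hKb0⟩ := Finset.exists_mem_eq_sup B ⟨j, hjB⟩ F
        rw [hBdef, Finset.mem_filter, Finset.mem_range] at hb0B
        obtain ⟨hb0x1, pp2, hpp2mem, hpp2⟩ := hb0B
        rw [Finset.mem_range] at hpp2mem
        have hv2 : F (m - 1) < F pp2 := hclaim1 pp2 b0 hpp2mem hb0x1 hpp2
        have hd1 := hAm (x1 - 1) (by omega)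
        exact claim2 σ F hF hinj A1 A2 A3 A4 A5 A6 A7 i j pp2 b0 (x1 - 1) x1 (m - 1)
          (by omega) h1 (by omega) hpp2mem (by omega) (by omega) (by omega)
          hji (by omega) hpp2 hv hv2 (hdesc (by omega))
          (fun hh => hx1 x1 (m - 1) le_rfl hh (by omega))
      have h7 : max (F (m - 1)) K < F i := max_lt hv hKi
      omega
    have hhigh : ∀ i j, i < j → j < x1 → y1 ≤ F i → y1 ≤ F j → F i < F j := by
      intro i j h1 h2 h3 h4
      by_contra h5
      push_neg at h5
      have hne5 : F i ≠ F j := fun hh => by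
        have := hinj i j (by omega) (by omega) hh; omega
      have hji : F j < F i := by omega
      have hjB : j ∈ B := by
        rw [hBdef, Finset.mem_filter, Finset.mem_range]
        exact ⟨h2, i, Finset.mem_range.mpr h1, hji⟩
      have hjK : F j ≤ K := hKmem j hjB
      omega
    have hsufval : ∀ i, x1 ≤ i → i < m → F i < y1 := by
      intro i h1 h2
      by_cases hieq : i = m - 1
      · rw [hieq]; exact hy1v
      · have := hx1 i (m - 1) h1 (by omega) (by omega)
        omega
    exact buildGrid σ F hF x1 y1 m (by omega) hy1m hmn hm hAm hx1 hsufval hlow hhigh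

theorem gridB_basis :
    ∀ (n : ℕ) (σ : Equiv.Perm (Fin n)),
      InGrid gridB σ ↔
        (Avoids σ ![2, 1, 4, 3] ∧ Avoids σ ![4, 3, 2, 1] ∧
         Avoids σ ![3, 5, 1, 4, 2] ∧ Avoids σ ![3, 5, 2, 1, 4] ∧
         Avoids σ ![3, 5, 2, 4, 1] ∧ Avoids σ ![4, 3, 1, 5, 2] ∧
         Avoids σ ![5, 3, 1, 4, 2]) := by
  intro n σ
  constructor
  · intro hg
    refine ⟨?_, ?_, ?_, ?_, ?_, ?_, ?_⟩ <;> intro hC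
    · obtain ⟨L, hP⟩ := forward_exists σ _ hg hC
      exact noLab1 (L 0) (L 1) (L 2) (L 3) ⟨hP 0 1 (by decide), hP 0 2 (by decide), hP 0 3 (by decide), hP 1 2 (by decide), hP 1 3 (by decide), hP 2 3 (by decide)⟩
    · obtain ⟨L, hP⟩ := forward_exists σ _ hg hC
      exact noLab2 (L 0) (L 1) (L 2) (L 3) ⟨hP 0 1 (by decide), hP 0 2 (by decide), hP 0 3 (by decide), hP 1 2 (by decide), hP 1 3 (by decide), hP 2 3 (by decide)⟩
    · obtain ⟨L, hP⟩ := forward_exists σ _ hg hC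
      exact noLab3 (L 0) (L 1) (L 2) (L 3) (L 4) ⟨hP 0 1 (by decide), hP 0 2 (by decide), hP 0 3 (by decide), hP 0 4 (by decide), hP 1 2 (by decide), hP 1 3 (by decide), hP 1 4 (by decide), hP 2 3 (by decide), hP 2 4 (by decide), hP 3 4 (by decide)⟩
    · obtain ⟨L, hP⟩ := forward_exists σ _ hg hC
      exact noLab4 (L 0) (L 1) (L 2) (L 3) (L 4) ⟨hP 0 1 (by decide), hP 0 2 (by decide), hP 0 3 (by decide), hP 0 4 (by decide), hP 1 2 (by decide), hP 1 3 (by decide), hP 1 4 (by decide), hP 2 3 (by decide), hP 2 4 (by decide), hP 3 4 (by decide)⟩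
    · obtain ⟨L, hP⟩ := forward_exists σ _ hg hC
      exact noLab5 (L 0) (L 1) (L 2) (L 3) (L 4) ⟨hP 0 1 (by decide), hP 0 2 (by decide), hP 0 3 (by decide), hP 0 4 (by decide), hP 1 2 (by decide), hP 1 3 (by decide), hP 1 4 (by decide), hP 2 3 (by decide), hP 2 4 (by decide), hP 3 4 (by decide)⟩
    · obtain ⟨L, hP⟩ := forward_exists σ _ hg hC
      exact noLab6 (L 0) (L 1) (L 2) (L 3) (L 4) ⟨hP 0 1 (by decide), hP 0 2 (by decide), hP 0 3 (by decide), hP 0 4 (by decide), hP 1 2 (by decide), hP 1 3 (by decide), hP 1 4 (by decide), hP 2 3 (by decide), hP 2 4 (by decide), hP 3 4 (by decide)⟩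
    · obtain ⟨L, hP⟩ := forward_exists σ _ hg hC
      exact noLab7 (L 0) (L 1) (L 2) (L 3) (L 4) ⟨hP 0 1 (by decide), hP 0 2 (by decide), hP 0 3 (by decide), hP 0 4 (by decide), hP 1 2 (by decide), hP 1 3 (by decide), hP 1 4 (by decide), hP 2 3 (by decide), hP 2 4 (by decide), hP 3 4 (by decide)⟩
  · rintro ⟨A1, A2, A3, A4, A5, A6, A7⟩
    exact backward σ A1 A2 A3 A4 A5 A6 A7
end

section
/- Every permutation σ of length n avoiding both 2143 and 4312 lies in the monotone grid class of the 2×2 matrix with entry 1 in cells (1,1), (1,2), (2,2) and entry −1 in cell (2,1) (cells written as (column, row), columns left to right, rows bottom to top). Equivalently, there exist a position cut 0 ≤ p ≤ n and a value cut 0 ≤ v ≤ n such that σ is increasing on the positions ≤ p with values ≤ v, increasing on the positions ≤ p with values > v, increasing on the positions > p with values > v, and decreasing on the positions > p with values ≤ v. -/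
def gridM : Fin 2 → Fin 2 → ℤ :=
  ![![1, 1], ![-1, 1]]

/-- From 2143-avoidance: an inversion `(i,j)` weakly before an inversion
`(a,b)` forces `σ b < σ i`. -/
lemma avAux2143 {n : ℕ} {σ : Equiv.Perm (Fin n)} (hav : Avoids σ ![2, 1, 4, 3])
    {i j a b : Fin n} (hij : i < j) (hja : (j : ℕ) ≤ (a : ℕ)) (hab : a < b)
    (h1 : σ j < σ i) (h2 : σ b < σ a) : σ b < σ i := by
  rcases eq_or_lt_of_le hja with he | hja
  · have : j = a := Fin.ext he
    subst this
    exact lt_trans h2 h1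
  · by_contra hc
    push_neg at hc
    have f1 : (i : ℕ) < j := hij
    have f2 : (a : ℕ) < b := hab
    have hne : σ i ≠ σ b := by
      intro h
      have := congrArg Fin.val (σ.injective h)
      omega
    have hib : σ i < σ b := lt_of_le_of_ne hc hne
    have e1 : (σ j : ℕ) < σ i := h1
    have e2 : (σ b : ℕ) < σ a := h2
    have e3 : (σ i : ℕ) < σ b := hib
    apply hav
    refine ⟨![i, j, a, b], ?_, ?_⟩
    · exact strictMono_vecCons.mpr ⟨hij, strictMono_vecCons.mpr
        ⟨show j < a from Fin.lt_def.mpr (by omega),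
          strictMono_vecCons.mpr ⟨hab, strictMono_vecEmpty⟩⟩⟩
    · intro x y
      fin_cases x <;> fin_cases y
      · show σ i < σ i ↔ (2:ℕ) < 2; simp only [Fin.lt_def]; omega
      · show σ i < σ j ↔ (2:ℕ) < 1; simp only [Fin.lt_def]; omega
      · show σ i < σ a ↔ (2:ℕ) < 4; simp only [Fin.lt_def]; omega
      · show σ i < σ b ↔ (2:ℕ) < 3; simp only [Fin.lt_def]; omega
      · show σ j < σ i ↔ (1:ℕ) < 2; simp only [Fin.lt_def]; omega
      · show σ j < σ j ↔ (1:ℕ) < 1; simp only [Fin.lt_def]; omega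
      · show σ j < σ a ↔ (1:ℕ) < 4; simp only [Fin.lt_def]; omega
      · show σ j < σ b ↔ (1:ℕ) < 3; simp only [Fin.lt_def]; omega
      · show σ a < σ i ↔ (4:ℕ) < 2; simp only [Fin.lt_def]; omega
      · show σ a < σ j ↔ (4:ℕ) < 1; simp only [Fin.lt_def]; omega
      · show σ a < σ a ↔ (4:ℕ) < 4; simp only [Fin.lt_def]; omega
      · show σ a < σ b ↔ (4:ℕ) < 3; simp only [Fin.lt_def]; omega
      · show σ b < σ i ↔ (3:ℕ) < 2; simp only [Fin.lt_def]; omega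
      · show σ b < σ j ↔ (3:ℕ) < 1; simp only [Fin.lt_def]; omega
      · show σ b < σ a ↔ (3:ℕ) < 4; simp only [Fin.lt_def]; omega
      · show σ b < σ b ↔ (3:ℕ) < 3; simp only [Fin.lt_def]; omega

/-- From 4312-avoidance: an inversion `(a,b)` weakly before an ascent `(c,d)`
forces `σ b < σ d`. -/
lemma avAux4312 {n : ℕ} {σ : Equiv.Perm (Fin n)} (hav : Avoids σ ![4, 3, 1, 2])
    {a b c d : Fin n} (hab : a < b) (hbc : (b : ℕ) ≤ (c : ℕ)) (hcd : c < d)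
    (h1 : σ b < σ a) (h2 : σ c < σ d) : σ b < σ d := by
  rcases eq_or_lt_of_le hbc with he | hbc
  · have : b = c := Fin.ext he
    subst this
    exact h2
  · by_contra hc
    push_neg at hc
    have f1 : (a : ℕ) < b := hab
    have f2 : (c : ℕ) < d := hcd
    have hne : σ d ≠ σ b := by
      intro h
      have := congrArg Fin.val (σ.injective h)
      omega
    have hdb : σ d < σ b := lt_of_le_of_ne hc hne
    have e1 : (σ b : ℕ) < σ a := h1
    have e2 : (σ c : ℕ) < σ d := h2
    have e3 : (σ d : ℕ) < σ b := hdb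
    apply hav
    refine ⟨![a, b, c, d], ?_, ?_⟩
    · exact strictMono_vecCons.mpr ⟨hab, strictMono_vecCons.mpr
        ⟨show b < c from Fin.lt_def.mpr (by omega),
          strictMono_vecCons.mpr ⟨hcd, strictMono_vecEmpty⟩⟩⟩
    · intro x y
      fin_cases x <;> fin_cases y
      · show σ a < σ a ↔ (4:ℕ) < 4; simp only [Fin.lt_def]; omega
      · show σ a < σ b ↔ (4:ℕ) < 3; simp only [Fin.lt_def]; omega
      · show σ a < σ c ↔ (4:ℕ) < 1; simp only [Fin.lt_def]; omega
      · show σ a < σ d ↔ (4:ℕ) < 2; simp only [Fin.lt_def]; omega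
      · show σ b < σ a ↔ (3:ℕ) < 4; simp only [Fin.lt_def]; omega
      · show σ b < σ b ↔ (3:ℕ) < 3; simp only [Fin.lt_def]; omega
      · show σ b < σ c ↔ (3:ℕ) < 1; simp only [Fin.lt_def]; omega
      · show σ b < σ d ↔ (3:ℕ) < 2; simp only [Fin.lt_def]; omega
      · show σ c < σ a ↔ (1:ℕ) < 4; simp only [Fin.lt_def]; omega
      · show σ c < σ b ↔ (1:ℕ) < 3; simp only [Fin.lt_def]; omega
      · show σ c < σ c ↔ (1:ℕ) < 1; simp only [Fin.lt_def]; omega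
      · show σ c < σ d ↔ (1:ℕ) < 2; simp only [Fin.lt_def]; omega
      · show σ d < σ a ↔ (2:ℕ) < 4; simp only [Fin.lt_def]; omega
      · show σ d < σ b ↔ (2:ℕ) < 3; simp only [Fin.lt_def]; omega
      · show σ d < σ c ↔ (2:ℕ) < 1; simp only [Fin.lt_def]; omega
      · show σ d < σ d ↔ (2:ℕ) < 2; simp only [Fin.lt_def]; omega

theorem av_2143_4312_in_two_by_two_grid :
    ∀ (n : ℕ) (σ : Equiv.Perm (Fin n)),
      Avoids σ ![2, 1, 4, 3] → Avoids σ ![4, 3, 1, 2] → InGrid gridM σ := by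
  intro n σ h2143 h4312
  classical
  -- the predicate defining the position cut
  have hex : ∃ t : ℕ, ∀ c d a b : Fin n, t ≤ (c : ℕ) → c < d → σ c < σ d →
      t ≤ (a : ℕ) → a < b → σ b < σ a → σ b < σ d := by
    refine ⟨n, fun c d a b hc _ _ _ _ _ => absurd hc (Nat.not_le.mpr c.isLt)⟩
  set p : ℕ := Nat.find hex with hpdef
  have hp := Nat.find_spec hex
  have hpn : p ≤ n :=
    Nat.find_min' hex (fun c d a b hc _ _ _ _ _ => absurd hc (Nat.not_le.mpr c.isLt))
  have hmin : ∀ t, t < p → ¬ (∀ c d a b : Fin n, t ≤ (c : ℕ) → c < d → σ c < σ d →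
      t ≤ (a : ℕ) → a < b → σ b < σ a → σ b < σ d) := fun t ht => Nat.find_min hex ht
  -- the value cut
  set F : Fin n → ℕ := fun b =>
    if ∃ a : Fin n, a < b ∧ σ b < σ a ∧ ((b : ℕ) < p ∨ p ≤ (a : ℕ)) then (σ b : ℕ) + 1 else 0
    with hF
  set v : ℕ := Finset.univ.sup F with hvdef
  have hv1 : ∀ a b : Fin n, a < b → σ b < σ a → ((b : ℕ) < p ∨ p ≤ (a : ℕ)) →
      (σ b : ℕ) < v := by
    intro a b h1 h2 h3
    have hcond : ∃ a : Fin n, a < b ∧ σ b < σ a ∧ ((b : ℕ) < p ∨ p ≤ (a : ℕ)) := ⟨a, h1, h2, h3⟩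
    have hle : F b ≤ v := Finset.le_sup (Finset.mem_univ b)
    have heq : F b = (σ b : ℕ) + 1 := if_pos hcond
    omega
  have hv2 : ∀ w : ℕ, (∀ a b : Fin n, a < b → σ b < σ a → ((b : ℕ) < p ∨ p ≤ (a : ℕ)) →
      (σ b : ℕ) < w) → v ≤ w := by
    intro w hw
    rw [hvdef]
    refine Finset.sup_le ?_
    intro b _
    rw [hF]
    dsimp only
    split_ifs with h
    · obtain ⟨a, h1, h2, h3⟩ := h
      exact Nat.succ_le_of_lt (hw a b h1 h2 h3)
    · exact Nat.zero_le w
  have hvn : v ≤ n := hv2 n (fun a b _ _ _ => (σ b).isLt)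
  -- key facts
  have keyB2 : ∀ a b : Fin n, a < b → σ b < σ a → (b : ℕ) < p → v ≤ (σ a : ℕ) := by
    intro a b hab hba hbp
    refine hv2 _ ?_
    intro a' b' h1 h2 h3
    rcases h3 with h3 | h3
    · have hp0 : 0 < p := lt_of_le_of_lt (Nat.zero_le _) hbp
      have hnp := hmin (p - 1) (by omega)
      push_neg at hnp
      obtain ⟨c, d, a₂, b₂, hc, hcd, hscd, ha₂, hab₂, hba₂, hnlt⟩ := hnp
      have hdf : σ d ≤ σ b₂ := hnlt
      have h4 : σ b' < σ d := avAux4312 h4312 h1 (by omega) hcd h2 hscd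
      have h5 : σ b₂ < σ a := avAux2143 h2143 hab (by omega) hab₂ hba hba₂
      exact lt_of_lt_of_le h4 (le_trans hdf (le_of_lt h5))
    · exact avAux2143 h2143 hab (by omega) h1 hba h2
  have keyC : ∀ c d : Fin n, c < d → σ c < σ d → p ≤ (c : ℕ) → v ≤ (σ d : ℕ) := by
    intro c d hcd hscd hpc
    refine hv2 _ ?_
    intro a b h1 h2 h3
    rcases h3 with h3 | h3
    · exact avAux4312 h4312 h1 (by omega) hcd h2 hscd
    · exact hp c d a b hpc hcd hscd h3 h1 h2
  -- build the gridding
  refine ⟨![0, p, n], ![0, v, n], ?_, ?_, rfl, rfl, rfl, rfl, ?_⟩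
  · exact monotone_vecCons.mpr ⟨Nat.zero_le _, monotone_vecCons.mpr ⟨hpn, monotone_vecEmpty⟩⟩
  · exact monotone_vecCons.mpr ⟨Nat.zero_le _, monotone_vecCons.mpr ⟨hvn, monotone_vecEmpty⟩⟩
  intro i j
  have hneq : ∀ q r : Fin n, q < r → σ q ≠ σ r := by
    intro q r hqr h
    exact absurd (σ.injective h) (ne_of_lt hqr)
  fin_cases i <;> fin_cases j
  · -- column 0, row 0 : increasing
    refine ⟨fun h => absurd h (by decide), fun _ q r hq hr hqr => ?_,
      fun h => absurd h (by decide), fun h => absurd h (by decide)⟩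
    obtain ⟨_, hq2, _, hq4⟩ := hq
    obtain ⟨_, hr2, _, hr4⟩ := hr
    rcases lt_or_gt_of_ne (hneq q r hqr) with h | h
    · exact h
    · have hrp : (r : ℕ) < p := hr2
      have := keyB2 q r hqr h hrp
      have hq4' : (σ q : ℕ) < v := hq4
      omega
  · -- column 0, row 1 : increasing
    refine ⟨fun h => absurd h (by decide), fun _ q r hq hr hqr => ?_,
      fun h => absurd h (by decide), fun h => absurd h (by decide)⟩
    obtain ⟨_, hq2, hq3, _⟩ := hq
    obtain ⟨_, hr2, hr3, _⟩ := hr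
    rcases lt_or_gt_of_ne (hneq q r hqr) with h | h
    · exact h
    · have hrp : (r : ℕ) < p := hr2
      have := hv1 q r hqr h (Or.inl hrp)
      have hr3' : v ≤ (σ r : ℕ) := hr3
      omega
  · -- column 1, row 0 : decreasing
    refine ⟨fun h => absurd h (by decide), fun h => absurd h (by decide),
      fun _ q r hq hr hqr => ?_, fun h => absurd h (by decide)⟩
    obtain ⟨hq1, _, _, hq4⟩ := hq
    obtain ⟨_, _, _, hr4⟩ := hr
    rcases lt_or_gt_of_ne (hneq q r hqr) with h | h
    · have hqp : p ≤ (q : ℕ) := hq1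
      have := keyC q r hqr h hqp
      have hr4' : (σ r : ℕ) < v := hr4
      omega
    · exact h
  · -- column 1, row 1 : increasing
    refine ⟨fun h => absurd h (by decide), fun _ q r hq hr hqr => ?_,
      fun h => absurd h (by decide), fun h => absurd h (by decide)⟩
    obtain ⟨hq1, _, hq3, _⟩ := hq
    obtain ⟨_, _, hr3, _⟩ := hr
    rcases lt_or_gt_of_ne (hneq q r hqr) with h | h
    · exact h
    · have hqp : p ≤ (q : ℕ) := hq1
      have := hv1 q r hqr h (Or.inr hqp)
      have hr3' : v ≤ (σ r : ℕ) := hr3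
      omega
end
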